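/- arXiv:math/0510410 — 4 statements merged into one kernel-verified Lean document; each statement's English description precedes it below -/
import Mathlib

section
/- If F is a compact family of finite subsets of ℕ and α a countable ordinal, then for every m ∈ ℕ, the α-th Cantor-Bendixson derivative of the restriction of F to ℕ/m = {n : n > m} equals the restriction to ℕ/m of the α-th derivative of F. -/
open Set

def chi (s : Finset ℕ) : ℕ → Bool := fun n => decide (n ∈ s)

def IsCompactFam (F : Set (Finset ℕ)) : Prop := IsClosed (chi '' F)

def Hered (F : Set (Finset ℕ)) : Prop := ∀ ⦃s t : Finset ℕ⦄, s ⊆ t → t ∈ F → s ∈ F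

def Preceq (s t : Finset ℕ) : Prop :=
  List.Forall₂ (· ≤ ·) (s.sort (· ≤ ·)) (t.sort (· ≤ ·))

def SpreadingOn (F : Set (Finset ℕ)) (M : Set ℕ) : Prop :=
  ∀ ⦃s t : Finset ℕ⦄, s ∈ F → Preceq s t → ↑t ⊆ M → t ∈ F

def Interpolates (t s : Finset ℕ) : Prop :=
  List.Forall₂ (· ≤ ·) (t.sort (· ≤ ·)) (s.sort (· ≤ ·)) ∧
  List.Forall₂ (· < ·) ((s.sort (· ≤ ·)).dropLast) ((t.sort (· ≤ ·)).tail)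

def Ad (F : Set (Finset ℕ)) : Set (Finset ℕ) := {s | ∃ t ∈ F, Interpolates t s}

def Restr (F : Set (Finset ℕ)) (M : Set ℕ) : Set (Finset ℕ) := {s ∈ F | ↑s ⊆ M}

noncomputable def iterDeriv {X : Type} [TopologicalSpace X] (A : Set X) (o : Ordinal.{0}) : Set X :=
  Ordinal.limitRecOn o A (fun _ ih => derivedSet ih)
    (fun o _ ih => ⋂ (b : Iio o), ih b b.2)

noncomputable def cbIndex (F : Set (Finset ℕ)) : Ordinal.{0} :=
  sInf {o : Ordinal | iterDeriv (chi '' F) o ⊆ {chi ∅}}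

def sec (F : Set (Finset ℕ)) (n : ℕ) : Set (Finset ℕ) :=
  {t | (∀ k ∈ t, n < k) ∧ insert n t ∈ F}

open scoped Classical in
noncomputable def IsHomogOn (F : Set (Finset ℕ)) (M : Set ℕ) (α : Ordinal.{0}) : Prop :=
  if α = 0 then F = {∅}
  else if h : ∃ β, α = Order.succ β then
    ∅ ∈ F ∧ ∀ n ∈ M, IsHomogOn (sec F n) (M ∩ Set.Ioi n) h.choose
  else
    ∅ ∈ F ∧ ∃ g : ℕ → Set.Iio α,
      (∀ n ∈ M, ∀ m ∈ M, n < m → (g n : Ordinal) < (g m : Ordinal)) ∧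
      (∀ β < α, ∃ n ∈ M, β < (g n : Ordinal)) ∧
      ∀ n ∈ M, IsHomogOn (sec F n) (M ∩ Set.Ioi n) (g n)
termination_by α
decreasing_by
  · exact lt_of_lt_of_le (Order.lt_succ _) h.choose_spec.ge
  · exact (g n).2

open scoped Classical in
noncomputable def IsUnifOn (F : Set (Finset ℕ)) (M : Set ℕ) (α : Ordinal.{0}) : Prop :=
  if α = 0 then F = {∅}
  else if h : ∃ β, α = Order.succ β then
    ∀ n ∈ M, IsUnifOn (sec F n) (M ∩ Set.Ioi n) h.choose
  else
    ∃ g : ℕ → Set.Iio α,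
      (∀ n ∈ M, ∀ m ∈ M, n < m → (g n : Ordinal) < (g m : Ordinal)) ∧
      (∀ β < α, ∃ n ∈ M, β < (g n : Ordinal)) ∧
      ∀ n ∈ M, IsUnifOn (sec F n) (M ∩ Set.Ioi n) (g n)
termination_by α
decreasing_by
  · exact lt_of_lt_of_le (Order.lt_succ _) h.choose_spec.ge
  · exact (g n).2

def osum (F G : Set (Finset ℕ)) : Set (Finset ℕ) :=
  {u | ∃ s t : Finset ℕ, s ∈ G ∧ t ∈ F ∧ (∀ a ∈ s, ∀ b ∈ t, a < b) ∧ u = s ∪ t}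

def otimes (F G : Set (Finset ℕ)) : Set (Finset ℕ) :=
  {u | ∃ l : List (Finset ℕ),
    l.Chain' (fun a b => ∀ x ∈ a, ∀ y ∈ b, x < y) ∧
    (∀ s ∈ l, s ∈ F ∧ s.Nonempty) ∧
    (l.map fun s => sInf (↑s : Set ℕ)).toFinset ∈ G ∧
    u = l.foldr (· ∪ ·) ∅}

def IsRegularOn (F : Set (Finset ℕ)) (M : Set ℕ) : Prop :=
  IsCompactFam F ∧ Hered F ∧ SpreadingOn F M ∧ ∀ s ∈ F, ↑s ⊆ M

def InitSeg (s t : Finset ℕ) : Prop := s ⊆ t ∧ ∀ x ∈ t, x ∉ s → ∀ y ∈ s, y < x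

def maxElems (F : Set (Finset ℕ)) : Set (Finset ℕ) :=
  {t ∈ F | ∀ u ∈ F, InitSeg t u → u = t}


lemma derivedSet_inter_clopen' {X : Type} [TopologicalSpace X] {U : Set X} (hU : IsClopen U)
    (A : Set X) : derivedSet (A ∩ U) = derivedSet A ∩ U := by
  apply subset_antisymm
  · exact Set.subset_inter (derivedSet_mono _ _ Set.inter_subset_left)
      ((derivedSet_subset_closure _).trans ((closure_mono Set.inter_subset_right).trans
        hU.isClosed.closure_subset))
  · rintro x ⟨hx, hxU⟩
    rw [mem_derivedSet, AccPt] at hx ⊢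
    have hUmem : U ∈ nhdsWithin x {x}ᶜ ⊓ Filter.principal A :=
      Filter.mem_inf_of_left (mem_nhdsWithin_of_mem_nhds (hU.isOpen.mem_nhds hxU))
    rw [← Filter.inf_principal, ← inf_assoc, inf_of_le_left (Filter.le_principal_iff.2 hUmem)]
    exact hx

lemma iterDeriv_zero' {X : Type} [TopologicalSpace X] (A : Set X) : iterDeriv A 0 = A :=
  Ordinal.limitRecOn_zero ..

lemma iterDeriv_succ' {X : Type} [TopologicalSpace X] (A : Set X) (o : Ordinal.{0}) :
    iterDeriv A (Order.succ o) = derivedSet (iterDeriv A o) :=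
  Ordinal.limitRecOn_succ ..

lemma iterDeriv_limit' {X : Type} [TopologicalSpace X] (A : Set X) (o : Ordinal.{0})
    (h : Order.IsSuccLimit o) : iterDeriv A o = ⋂ (b : Set.Iio o), iterDeriv A b :=
  Ordinal.limitRecOn_limit _ _ _ _ h

lemma iterDeriv_inter_clopen' {X : Type} [TopologicalSpace X] {U : Set X} (hU : IsClopen U)
    (A : Set X) (α : Ordinal.{0}) : iterDeriv (A ∩ U) α = iterDeriv A α ∩ U := by
  induction α using Ordinal.limitRecOn with
  | zero => rw [iterDeriv_zero', iterDeriv_zero']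
  | add_one o ih => rw [← Order.succ_eq_add_one, iterDeriv_succ', iterDeriv_succ', ih, derivedSet_inter_clopen' hU]
  | limit o ho ih =>
    have : Nonempty (Set.Iio o) := ⟨0, ho.bot_lt⟩
    rw [iterDeriv_limit' _ _ ho, iterDeriv_limit' _ _ ho,
      Set.iInter_congr (fun b : Set.Iio o => ih b b.2), Set.iInter_inter]

/-- the derivative of the restriction to ℕ/m is the restriction of the
derivative. -/
theorem iterDeriv_restr_tail (F : Set (Finset ℕ)) (hF : IsCompactFam F)
    (α : Ordinal.{0}) (hα : α.card ≤ Cardinal.aleph0) (m : ℕ) :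
    iterDeriv (chi '' Restr F (Set.Ioi m)) α
      = {x ∈ iterDeriv (chi '' F) α | ∀ n : ℕ, x n = true → m < n} := by
  set U : Set (ℕ → Bool) := {x | ∀ n : ℕ, x n = true → m < n} with hUdef
  have hU : IsClopen U := by
    have hEq : U = ⋂ n ∈ Finset.range (m + 1), (fun x : ℕ → Bool => x n) ⁻¹' {false} := by
      ext x
      simp only [hUdef, Set.mem_setOf_eq, Set.mem_iInter, Set.mem_preimage,
        Set.mem_singleton_iff, Finset.mem_range, Nat.lt_succ_iff]
      constructor
      · intro h n hn
        by_contra hb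
        exact absurd (h n (by simpa using hb)) (by omega)
      · intro h n hn
        by_contra hb
        have := h n (by omega)
        simp [this] at hn
    rw [hEq]
    exact isClopen_biInter_finset fun n _ =>
      (isClopen_discrete {false}).preimage (continuous_apply n)
  have himg : chi '' Restr F (Set.Ioi m) = (chi '' F) ∩ U := by
    ext x
    constructor
    · rintro ⟨s, ⟨hsF, hs⟩, rfl⟩
      refine ⟨⟨s, hsF, rfl⟩, fun n hn => ?_⟩
      exact hs (by simpa [chi] using hn)
    · rintro ⟨⟨s, hsF, rfl⟩, hx⟩
      exact ⟨s, ⟨hsF, fun n hn => hx n (by simp [chi, Finset.mem_coe.mp hn])⟩, rfl⟩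
  rw [himg, iterDeriv_inter_clopen' hU]
  rfl
end

section
/- If F is a homogeneous family on an infinite set M, then there exists an infinite N ⊆ M such that F↾N is hereditary (closed under taking subsets). -/
open Set

lemma isHomogOn_zero {F : Set (Finset ℕ)} {M : Set ℕ} : IsHomogOn F M 0 ↔ F = {∅} := by
  rw [IsHomogOn]; simp

lemma isHomogOn_succ {F : Set (Finset ℕ)} {M : Set ℕ} {β : Ordinal.{0}} :
    IsHomogOn F M (Order.succ β) ↔
      ∅ ∈ F ∧ ∀ n ∈ M, IsHomogOn (sec F n) (M ∩ Set.Ioi n) β := by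
  have hne : (Order.succ β : Ordinal) ≠ 0 := Ordinal.succ_ne_zero β
  have hex : ∃ b : Ordinal, Order.succ β = Order.succ b := ⟨β, rfl⟩
  have hc : hex.choose = β := (Order.succ_injective hex.choose_spec).symm
  rw [IsHomogOn, if_neg hne, dif_pos hex, hc]

lemma isHomogOn_limit {F : Set (Finset ℕ)} {M : Set ℕ} {α : Ordinal.{0}}
    (h0 : α ≠ 0) (hs : ¬ ∃ β, α = Order.succ β) :
    IsHomogOn F M α ↔
      ∅ ∈ F ∧ ∃ g : ℕ → Set.Iio α,
        (∀ n ∈ M, ∀ m ∈ M, n < m → (g n : Ordinal) < (g m : Ordinal)) ∧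
        (∀ β < α, ∃ n ∈ M, β < (g n : Ordinal)) ∧
        ∀ n ∈ M, IsHomogOn (sec F n) (M ∩ Set.Ioi n) (g n) := by
  rw [IsHomogOn, if_neg h0, dif_neg hs]

lemma homog_empty_mem {F : Set (Finset ℕ)} {M : Set ℕ} {α : Ordinal.{0}}
    (h0 : α ≠ 0) (h : IsHomogOn F M α) : ∅ ∈ F := by
  rcases Ordinal.zero_or_succ_or_isSuccLimit α with rfl | ⟨β, rfl⟩ | hl
  · exact absurd rfl h0
  · exact (isHomogOn_succ.1 h).1
  · exact ((isHomogOn_limit h0 (fun ⟨a, ha⟩ => Order.not_isSuccLimit_succ a (ha ▸ hl))).1 h).1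

/-- sections of a nonzero-rank homogeneous family are homogeneous of smaller rank -/
lemma homog_sec {F : Set (Finset ℕ)} {M : Set ℕ} {α : Ordinal.{0}}
    (h0 : α ≠ 0) (h : IsHomogOn F M α) {n : ℕ} (hn : n ∈ M) :
    ∃ δ < α, IsHomogOn (sec F n) (M ∩ Set.Ioi n) δ := by
  rcases Ordinal.zero_or_succ_or_isSuccLimit α with rfl | ⟨β, rfl⟩ | hl
  · exact absurd rfl h0
  · exact ⟨β, Order.lt_succ β, (isHomogOn_succ.1 h).2 n hn⟩
  · obtain ⟨-, g, -, -, hsec⟩ :=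
      (isHomogOn_limit h0 (fun ⟨a, ha⟩ => Order.not_isSuccLimit_succ a (ha ▸ hl))).1 h
    exact ⟨g n, (g n).2, hsec n hn⟩

lemma inter_Ioi_infinite {M : Set ℕ} (hM : M.Infinite) (n : ℕ) : (M ∩ Set.Ioi n).Infinite := by
  have : M ∩ Set.Ioi n = M \ Set.Iic n := by rw [Set.diff_eq, Set.compl_Iic]
  rw [this]; exact hM.diff (Set.finite_Iic n)

/-- homogeneity restricts to infinite subsets -/
lemma homog_mono : ∀ α : Ordinal.{0}, ∀ {F : Set (Finset ℕ)} {M M' : Set ℕ},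
    IsHomogOn F M α → M' ⊆ M → M'.Infinite → IsHomogOn F M' α := by
  intro α
  induction α using Ordinal.induction with
  | h α IH =>
    intro F M M' h hsub hinf
    rcases Ordinal.zero_or_succ_or_isSuccLimit α with rfl | ⟨β, rfl⟩ | hl
    · exact isHomogOn_zero.2 (isHomogOn_zero.1 h)
    · obtain ⟨he, hsec⟩ := isHomogOn_succ.1 h
      refine isHomogOn_succ.2 ⟨he, fun n hn => ?_⟩
      exact IH β (Order.lt_succ β) (hsec n (hsub hn))
        (inter_subset_inter_left _ hsub) (inter_Ioi_infinite hinf n)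
    · have hns : ¬ ∃ a, α = Order.succ a := fun ⟨a, ha⟩ => Order.not_isSuccLimit_succ a (ha ▸ hl)
      obtain ⟨he, g, hmono, hcof, hsec⟩ := (isHomogOn_limit hl.ne_zero hns).1 h
      refine (isHomogOn_limit hl.ne_zero hns).2 ⟨he, g, fun n hn m hm => hmono n (hsub hn) m (hsub hm),
        ?_, fun n hn => IH (g n) (g n).2 (hsec n (hsub hn))
          (inter_subset_inter_left _ hsub) (inter_Ioi_infinite hinf n)⟩
      intro β hβ
      obtain ⟨n₀, hn₀, hgn₀⟩ := hcof β hβ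
      obtain ⟨m, hm, hlt⟩ := hinf.exists_gt n₀
      exact ⟨m, hm, hgn₀.trans (hmono n₀ hn₀ m (hsub hm) hlt)⟩


lemma fusion (P : Set ℕ) (hP : P.Infinite) (good : ℕ → Set ℕ → Prop)
    (mono : ∀ n (Q Q' : Set ℕ), Q' ⊆ Q → good n Q → good n Q')
    (step : ∀ n (Q : Set ℕ), Q ⊆ P → Q.Infinite → n ∈ Q →
      ∃ Q', Q' ⊆ Q ∩ Set.Ioi n ∧ Q'.Infinite ∧ good n Q') :
    ∃ N ⊆ P, N.Infinite ∧ ∀ n ∈ N, good n (N ∩ Set.Ioi n) := by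
  classical
  -- the type of states
  let T := {p : ℕ × Set ℕ // p.1 ∈ P ∧ p.2 ⊆ P ∧ p.2.Infinite ∧ p.2 ⊆ Set.Ioi p.1 ∧ good p.1 p.2}
  have next : ∀ t : T, ∃ t' : T, t'.1.1 ∈ t.1.2 ∧ t'.1.2 ⊆ t.1.2 := by
    rintro ⟨⟨n, Q⟩, hnP, hQP, hQinf, hQIoi, hgood⟩
    obtain ⟨n', hn'⟩ := hQinf.nonempty
    obtain ⟨Q', hQ'sub, hQ'inf, hQ'good⟩ := step n' Q hQP hQinf hn'
    exact ⟨⟨⟨n', Q'⟩, hQP hn', (hQ'sub.trans inter_subset_left).trans hQP, hQ'inf,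
      hQ'sub.trans inter_subset_right, hQ'good⟩, hn', hQ'sub.trans inter_subset_left⟩
  choose nxt hnxt1 hnxt2 using next
  obtain ⟨n₀, hn₀⟩ := hP.nonempty
  obtain ⟨Q₀, hQ₀sub, hQ₀inf, hQ₀good⟩ := step n₀ P Subset.rfl hP hn₀
  let t₀ : T := ⟨⟨n₀, Q₀⟩, hn₀, hQ₀sub.trans inter_subset_left, hQ₀inf,
    hQ₀sub.trans inter_subset_right, hQ₀good⟩
  let f : ℕ → T := fun k => nxt^[k] t₀
  have hfsucc : ∀ k, f (k + 1) = nxt (f k) := fun k => Function.iterate_succ_apply' nxt k t₀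
  -- basic facts
  have hmem : ∀ k, (f (k + 1)).1.1 ∈ (f k).1.2 := fun k => by rw [hfsucc]; exact hnxt1 (f k)
  have hQmono : ∀ k l, k ≤ l → (f l).1.2 ⊆ (f k).1.2 := by
    intro k l hkl
    induction l with
    | zero => cases Nat.le_zero.1 hkl; exact Subset.rfl
    | succ l ih =>
      rcases Nat.lt_or_ge k (l + 1) with hlt | hge
      · exact ((hfsucc l ▸ hnxt2 (f l)) : (f (l+1)).1.2 ⊆ (f l).1.2).trans
          (ih (Nat.lt_succ_iff.1 hlt))
      · cases Nat.le_antisymm hkl hge; exact Subset.rfl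
  have hstrict : StrictMono (fun k => (f k).1.1) := by
    apply strictMono_nat_of_lt_succ
    intro k
    exact (f k).2.2.2.2.1 (hmem k)
  have hinP : ∀ k, (f k).1.1 ∈ P := fun k => (f k).2.1
  refine ⟨Set.range (fun k => (f k).1.1), ?_, Set.infinite_range_of_injective hstrict.injective,
    ?_⟩
  · rintro x ⟨k, rfl⟩; exact hinP k
  · rintro x ⟨k, rfl⟩
    refine mono _ _ _ ?_ (f k).2.2.2.2.2
    rintro y ⟨⟨j, rfl⟩, hy⟩
    have hjk : k < j := by
      by_contra hc
      exact absurd hy (by simpa using (hstrict.monotone (Nat.le_of_not_lt hc)).not_gt)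
    rcases Nat.exists_eq_add_of_lt hjk with ⟨m, rfl⟩
    exact hQmono k (k + m) (Nat.le_add_right k m) (hmem (k + m))


lemma homog_sec_ge {F : Set (Finset ℕ)} {P : Set ℕ} {α γ : Ordinal.{0}}
    (h : IsHomogOn F P α) (hγ : γ < α) (hP : P.Infinite) :
    ∃ P₀ ⊆ P, P₀.Infinite ∧ ∀ n ∈ P₀, ∃ δ, γ ≤ δ ∧ δ < α ∧
      IsHomogOn (sec F n) (P ∩ Set.Ioi n) δ := by
  rcases Ordinal.zero_or_succ_or_isSuccLimit α with rfl | ⟨β, rfl⟩ | hl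
  · exact absurd hγ ((zero_le (a := γ)).not_gt)
  · exact ⟨P, Subset.rfl, hP, fun n hn =>
      ⟨β, Order.lt_succ_iff.1 hγ, Order.lt_succ β, (isHomogOn_succ.1 h).2 n hn⟩⟩
  · have hns : ¬ ∃ a, α = Order.succ a := fun ⟨a, ha⟩ => Order.not_isSuccLimit_succ a (ha ▸ hl)
    obtain ⟨-, g, hmono, hcof, hsec⟩ := (isHomogOn_limit hl.ne_zero hns).1 h
    obtain ⟨n₀, hn₀, hgn₀⟩ := hcof γ hγ
    refine ⟨P ∩ Set.Ioi n₀, inter_subset_left, inter_Ioi_infinite hP n₀, ?_⟩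
    rintro n ⟨hnP, hn₀n⟩
    exact ⟨g n, (hgn₀.trans (hmono n₀ hn₀ n hnP hn₀n)).le, (g n).2, hsec n hnP⟩

lemma homog_absorb : ∀ β : Ordinal.{0}, ∀ {γ : Ordinal.{0}} {F G : Set (Finset ℕ)} {P : Set ℕ},
    γ < β → P.Infinite → IsHomogOn F P β → IsHomogOn G P γ →
    ∃ N ⊆ P, N.Infinite ∧ ∀ s ∈ G, ↑s ⊆ N → s ∈ F := by
  intro β
  induction β using Ordinal.induction with
  | h β IH =>
    intro γ F G P hγβ hP hF hG
    have hβ0 : β ≠ 0 := fun h0 => (zero_le (a := γ)).not_gt (h0 ▸ hγβ)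
    have hemp : ∅ ∈ F := homog_empty_mem hβ0 hF
    by_cases hγ0 : γ = 0
    · subst hγ0
      refine ⟨P, Subset.rfl, hP, fun s hs _ => ?_⟩
      rw [isHomogOn_zero.1 hG] at hs
      rw [Set.mem_singleton_iff.1 hs]; exact hemp
    · obtain ⟨P₀, hP₀sub, hP₀inf, hsecF⟩ := homog_sec_ge hF hγβ hP
      obtain ⟨N, hNsub, hNinf, hNgood⟩ := fusion P₀ hP₀inf
        (fun n Q => ∀ s ∈ sec G n, ↑s ⊆ Q → s ∈ sec F n)
        (fun n Q Q' hQQ hg s hs hsQ => hg s hs (hsQ.trans hQQ))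
        (by
          intro n Q hQP₀ hQinf hnQ
          obtain ⟨δ, hγδ, hδβ, hFsec⟩ := hsecF n (hQP₀ hnQ)
          obtain ⟨γn, hγn, hGsec⟩ := homog_sec hγ0 hG (hP₀sub (hQP₀ hnQ))
          have hsub : Q ∩ Set.Ioi n ⊆ P ∩ Set.Ioi n :=
            inter_subset_inter_left _ (hQP₀.trans hP₀sub)
          have hinf := inter_Ioi_infinite hQinf n
          obtain ⟨N', hN'sub, hN'inf, habs⟩ := IH δ hδβ (hγn.trans_le hγδ) hinf
            (homog_mono δ hFsec hsub hinf) (homog_mono γn hGsec hsub hinf)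
          exact ⟨N', hN'sub, hN'inf, habs⟩)
      refine ⟨N, hNsub.trans hP₀sub, hNinf, ?_⟩
      intro s hsG hsN
      rcases s.eq_empty_or_nonempty with rfl | hne
      · exact hemp
      · set n := s.min' hne with hn
        have hnmem : n ∈ s := s.min'_mem hne
        have h1 : s.erase n ∈ sec G n := by
          refine ⟨fun k hk => lt_of_le_of_ne (s.min'_le k (Finset.mem_of_mem_erase hk))
            (Ne.symm (Finset.ne_of_mem_erase hk)), ?_⟩
          rw [Finset.insert_erase hnmem]; exact hsG
        have h2 : ↑(s.erase n) ⊆ N ∩ Set.Ioi n := fun k hk => by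
          obtain ⟨hkn, hks⟩ := Finset.mem_erase.1 (Finset.mem_coe.1 hk)
          exact ⟨hsN hks, h1.1 k (Finset.mem_coe.1 hk)⟩
        have h3 := hNgood n (hsN hnmem) (s.erase n) h1 h2
        have := h3.2
        rwa [Finset.insert_erase hnmem] at this

lemma homog_hered : ∀ α : Ordinal.{0}, ∀ {F : Set (Finset ℕ)} {M : Set ℕ},
    M.Infinite → IsHomogOn F M α →
    ∃ N ⊆ M, N.Infinite ∧ ∀ t ∈ F, ↑t ⊆ N → ∀ s ⊆ t, s ∈ F := by
  intro α
  induction α using Ordinal.induction with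
  | h α IH =>
    intro F M hM hF
    by_cases hα0 : α = 0
    · subst hα0
      refine ⟨M, Subset.rfl, hM, fun t ht _ s hs => ?_⟩
      rw [isHomogOn_zero.1 hF] at ht ⊢
      rw [Set.mem_singleton_iff.1 ht] at hs
      rw [Finset.subset_empty.1 hs]; rfl
    · obtain ⟨N, hNsub, hNinf, hNgood⟩ := fusion M hM
        (fun n Q => (∀ t ∈ sec F n, ↑t ⊆ Q → ∀ s ⊆ t, s ∈ sec F n) ∧
          (∀ s ∈ sec F n, ↑s ⊆ Q → s ∈ F))
        (fun n Q Q' hQQ hg =>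
          ⟨fun t ht htQ => hg.1 t ht (htQ.trans hQQ), fun s hs hsQ => hg.2 s hs (hsQ.trans hQQ)⟩)
        (by
          intro n Q hQM hQinf hnQ
          obtain ⟨δ, hδα, hFsec⟩ := homog_sec hα0 hF (hQM hnQ)
          have hinf := inter_Ioi_infinite hQinf n
          have hsec' : IsHomogOn (sec F n) (Q ∩ Set.Ioi n) δ :=
            homog_mono δ hFsec (inter_subset_inter_left _ hQM) hinf
          obtain ⟨N', hN'sub, hN'inf, hhered⟩ := IH δ hδα hinf hsec'
          obtain ⟨Q', hQ'sub, hQ'inf, habs⟩ := homog_absorb α hδα hN'inf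
            (homog_mono α hF (hN'sub.trans ((inter_subset_left).trans hQM)) hN'inf)
            (homog_mono δ hsec' hN'sub hN'inf)
          exact ⟨Q', hQ'sub.trans hN'sub, hQ'inf,
            ⟨fun t ht htQ => hhered t ht (htQ.trans hQ'sub), habs⟩⟩)
      refine ⟨N, hNsub, hNinf, ?_⟩
      intro t ht htN s hst
      rcases t.eq_empty_or_nonempty with rfl | hne
      · rw [Finset.subset_empty.1 hst]; exact ht
      · set n := t.min' hne with hn
        have hnmem : n ∈ t := t.min'_mem hne
        obtain ⟨h1, h2⟩ := hNgood n (htN hnmem)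
        have ht' : t.erase n ∈ sec F n := by
          refine ⟨fun k hk => lt_of_le_of_ne (t.min'_le k (Finset.mem_of_mem_erase hk))
            (Ne.symm (Finset.ne_of_mem_erase hk)), ?_⟩
          rw [Finset.insert_erase hnmem]; exact ht
        have htN' : ↑(t.erase n) ⊆ N ∩ Set.Ioi n := fun k hk => by
          obtain ⟨hkn, hkt⟩ := Finset.mem_erase.1 (Finset.mem_coe.1 hk)
          exact ⟨htN hkt, ht'.1 k (Finset.mem_coe.1 hk)⟩
        by_cases hns : n ∈ s
        · have := (h1 _ ht' htN' (s.erase n) (Finset.erase_subset_erase n hst)).2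
          rwa [Finset.insert_erase hns] at this
        · have hs' : s ⊆ t.erase n := Finset.subset_erase.2 ⟨hst, hns⟩
          have hsec := h1 _ ht' htN' s hs'
          have hsN : ↑s ⊆ N ∩ Set.Ioi n := fun k hk => htN' (Finset.coe_subset.2 hs' hk)
          exact h2 s hsec hsN

/-- a homogeneous family has a restriction which is hereditary. -/
theorem homog_restriction_hereditary (F : Set (Finset ℕ)) (M : Set ℕ)
    (hM : M.Infinite) (h : ∃ α : Ordinal.{0}, IsHomogOn F M α) :
    ∃ N ⊆ M, N.Infinite ∧ Hered (Restr F N) := by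
  obtain ⟨α, hα⟩ := h
  obtain ⟨N, hNM, hNinf, hprop⟩ := homog_hered α hM hα
  refine ⟨N, hNM, hNinf, ?_⟩
  rintro s t hst ⟨htF, htN⟩
  exact ⟨hprop t htF htN s hst, (Finset.coe_subset.2 hst).trans htN⟩
end

section
/- If F and G are compact hereditary families of finite subsets of ℕ, then there exists an infinite set M ⊆ ℕ such that either F↾M ⊆ G↾M or G↾M ⊆ F↾M. -/
open Set

section GalvinAux

/-- `p` is a finite initial segment (prefix) of the set `A`. -/
def Pfx (p : Finset ℕ) (A : Set ℕ) : Prop :=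
  ↑p ⊆ A ∧ ∀ x ∈ A, x ∉ p → ∀ y ∈ p, y < x

lemma pfx_empty (A : Set ℕ) : Pfx ∅ A := by
  constructor
  · simp
  · intro x _ _ y hy; simp at hy

lemma pfx_comp {p t : Finset ℕ} {A : Set ℕ} (hp : Pfx p A) (ht : Pfx t A) :
    p ⊆ t ∨ t ⊆ p := by
  by_contra h
  push_neg at h
  obtain ⟨hpt, htp⟩ := h
  obtain ⟨x, hxp, hxt⟩ := Finset.not_subset.1 hpt
  obtain ⟨y, hyt, hyp⟩ := Finset.not_subset.1 htp
  have h1 : y < x := ht.2 x (hp.1 hxp) hxt y hyt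
  have h2 : x < y := hp.2 y (ht.1 hyt) hyp x hxp
  omega

lemma pfx_insert {p : Finset ℕ} {A : Set ℕ} {n : ℕ} (hn : n ∈ A)
    (hmin : ∀ x ∈ A, x ≠ n → n < x) (hp : Pfx p (A \ {n})) :
    Pfx (insert n p) A := by
  constructor
  · intro x hx
    simp only [Finset.coe_insert, Set.mem_insert_iff] at hx
    rcases hx with rfl | hx
    · exact hn
    · exact (hp.1 hx).1
  · intro x hx hxnp y hy
    have hxn : x ≠ n := by rintro rfl; exact hxnp (Finset.mem_insert_self _ _)
    have hxA' : x ∈ A \ {n} := ⟨hx, hxn⟩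
    have hxp : x ∉ p := fun hc => hxnp (Finset.mem_insert_of_mem hc)
    rcases Finset.mem_insert.1 hy with rfl | hy
    · exact hmin x hx hxn
    · exact hp.2 x hxA' hxp y hy

variable (S : Set (Finset ℕ))

def Accepts (X : Set ℕ) (s : Finset ℕ) : Prop :=
  ∀ A : Set ℕ, A ⊆ X → A.Infinite → (∀ y ∈ s, ∀ x ∈ A, y < x) →
    ∃ p : Finset ℕ, Pfx p A ∧ s ∪ p ∈ S

def Rejects (X : Set ℕ) (s : Finset ℕ) : Prop :=
  ∀ Y : Set ℕ, Y ⊆ X → Y.Infinite → ¬ Accepts S Y s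

lemma accepts_mono {X Y : Set ℕ} {s : Finset ℕ} (h : Accepts S X s) (hYX : Y ⊆ X) :
    Accepts S Y s := fun A hA hAi hgt => h A (hA.trans hYX) hAi hgt

lemma rejects_mono {X Y : Set ℕ} {s : Finset ℕ} (h : Rejects S X s) (hYX : Y ⊆ X) :
    Rejects S Y s := fun Z hZ hZi => h Z (hZ.trans hYX) hZi

lemma mem_accepts {X : Set ℕ} {t : Finset ℕ} (ht : t ∈ S) : Accepts S X t := by
  intro A _ _ _
  exact ⟨∅, pfx_empty A, by simpa using ht⟩



lemma lemB (P : Finset (Finset ℕ)) (X : Set ℕ) (hX : X.Infinite)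
    (hrej : ∀ s ∈ P, Rejects S X s) :
    ∃ n ∈ X, ∃ Y : Set ℕ, Y ⊆ X ∩ Set.Ioi n ∧ Y.Infinite ∧
      ∀ s ∈ P, Rejects S Y (insert n s) := by
  by_contra hcon
  push_neg at hcon
  -- step existence
  have step_ex : ∀ Z : {Z : Set ℕ // Z ⊆ X ∧ Z.Infinite},
      ∃ W : {Z : Set ℕ // Z ⊆ X ∧ Z.Infinite}, ∃ s : Finset ℕ, s ∈ P ∧
        W.1 ⊆ Z.1 ∩ Set.Ioi (sInf Z.1) ∧ Accepts S W.1 (insert (sInf Z.1) s) := by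
    rintro ⟨Z, hZX, hZi⟩
    have hne : Z.Nonempty := hZi.nonempty
    have hnX : sInf Z ∈ X := hZX (Nat.sInf_mem hne)
    have hYsub : Z ∩ Set.Ioi (sInf Z) ⊆ X ∩ Set.Ioi (sInf Z) :=
      Set.inter_subset_inter_left _ hZX
    have hYinf : (Z ∩ Set.Ioi (sInf Z)).Infinite := by
      have h1 : Z \ Set.Iic (sInf Z) ⊆ Z ∩ Set.Ioi (sInf Z) := by
        rintro x ⟨hx1, hx2⟩
        exact ⟨hx1, by simpa using hx2⟩
      exact (hZi.diff (Set.finite_Iic _)).mono h1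
    obtain ⟨s, hsP, hns⟩ := hcon (sInf Z) hnX _ hYsub hYinf
    rw [Rejects] at hns
    push_neg at hns
    obtain ⟨W, hWY, hWinf, hWacc⟩ := hns
    exact ⟨⟨W, (hWY.trans hYsub).trans (Set.inter_subset_left), hWinf⟩, s, hsP,
      hWY.trans (Set.inter_subset_inter_left _ (by exact fun a ha => ha)), hWacc⟩
  choose Fstep sfun hsP hsub hacc using step_ex
  set t0 : {Z : Set ℕ // Z ⊆ X ∧ Z.Infinite} := ⟨X, subset_rfl, hX⟩ with ht0
  set seq : ℕ → {Z : Set ℕ // Z ⊆ X ∧ Z.Infinite} := fun k => Fstep^[k] t0 with hseq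
  have hseqsucc : ∀ k, seq (k + 1) = Fstep (seq k) := by
    intro k; simp [hseq, Function.iterate_succ_apply']
  set n : ℕ → ℕ := fun k => sInf (seq k).1 with hn
  have hnmem : ∀ k, n k ∈ (seq k).1 := fun k => Nat.sInf_mem (seq k).2.2.nonempty
  have hsub' : ∀ k, (seq (k + 1)).1 ⊆ (seq k).1 ∩ Set.Ioi (n k) := by
    intro k; rw [hseqsucc k]; exact hsub (seq k)
  have hacc' : ∀ k, Accepts S (seq (k + 1)).1 (insert (n k) (sfun (seq k))) := by
    intro k; rw [hseqsucc k]; exact hacc (seq k)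
  have hmonoZ : ∀ k j, k ≤ j → (seq j).1 ⊆ (seq k).1 := by
    intro k j hkj
    induction j with
    | zero => simp_all
    | succ j ih =>
      rcases Nat.lt_or_ge k (j + 1) with h | h
      · exact ((hsub' j).trans Set.inter_subset_left).trans (ih (Nat.lt_succ_iff.1 h))
      · have : k = j + 1 := le_antisymm hkj h
        subst this; exact subset_rfl
  have hnlt : StrictMono n := by
    apply strictMono_nat_of_lt_succ
    intro k
    have := hsub' k (hnmem (k + 1))
    exact this.2
  -- pigeonhole
  have hfib : ∃ s ∈ P, {k : ℕ | sfun (seq k) = s}.Infinite := by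
    by_contra hf
    push_neg at hf
    have : (Set.univ : Set ℕ) ⊆ ⋃ s ∈ P, {k : ℕ | sfun (seq k) = s} := by
      intro k _
      exact Set.mem_biUnion (hsP (seq k)) rfl
    have hfin : (⋃ s ∈ P, {k : ℕ | sfun (seq k) = s}).Finite :=
      Set.Finite.biUnion P.finite_toSet fun s hs => hf s hs
    exact Set.infinite_univ (hfin.subset this)
  obtain ⟨s0, hs0P, hK⟩ := hfib
  set K := {k : ℕ | sfun (seq k) = s0} with hKdef
  set B := n '' K with hB
  have hBX : B ⊆ X := by
    rintro x ⟨k, _, rfl⟩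
    exact (seq k).2.1 (hnmem k)
  have hBinf : B.Infinite := hK.image (hnlt.injective.injOn)
  -- B accepts s0
  have hBacc : Accepts S B s0 := by
    intro A hAB hAinf hgt
    have hAne : A.Nonempty := hAinf.nonempty
    set m := sInf A with hm
    have hmA : m ∈ A := Nat.sInf_mem hAne
    obtain ⟨k, hkK, hkm⟩ := hAB hmA
    have hmlt : ∀ x ∈ A, x ≠ m → m < x := by
      intro x hx hxm
      exact lt_of_le_of_ne (Nat.sInf_le hx) (Ne.symm hxm)
    have hA'sub : A \ {m} ⊆ (seq (k + 1)).1 := by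
      rintro x ⟨hxA, hxm⟩
      simp only [Set.mem_singleton_iff] at hxm
      obtain ⟨j, _, rfl⟩ := hAB hxA
      have : n k < n j := by rw [hkm]; exact hmlt _ hxA hxm
      have hkj : k < j := hnlt.lt_iff_lt.1 this
      exact hmonoZ (k + 1) j hkj (hnmem j)
    have hA'inf : (A \ {m}).Infinite := hAinf.diff (Set.finite_singleton m)
    have hgt' : ∀ y ∈ insert (n k) (sfun (seq k)), ∀ x ∈ A \ {m}, y < x := by
      intro y hy x hx
      rcases Finset.mem_insert.1 hy with rfl | hy
      · rw [hkm]; exact hmlt x hx.1 (by simpa using hx.2)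
      · rw [hkK] at hy; exact hgt y hy x hx.1
    obtain ⟨p, hp, hpS⟩ := hacc' k (A \ {m}) hA'sub hA'inf hgt'
    refine ⟨insert m p, pfx_insert hmA hmlt hp, ?_⟩
    have : s0 ∪ insert m p = insert (n k) (sfun (seq k)) ∪ p := by
      rw [hkK, hkm, Finset.union_insert, Finset.insert_union]
    rwa [this]
  exact hrej s0 hs0P B hBX hBinf hBacc

lemma buildN (M : Set ℕ) (hM : M.Infinite) (h0 : Rejects S M ∅) :
    ∃ N : Set ℕ, N ⊆ M ∧ N.Infinite ∧ ∀ t ∈ S, ¬ ↑t ⊆ N := by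
  set T := {q : Finset ℕ × Set ℕ // q.2 ⊆ M ∧ q.2.Infinite ∧ ∀ s ⊆ q.1, Rejects S q.2 s}
    with hT
  have step_ex : ∀ q : T, ∃ q' : T, ∃ m : ℕ, m ∈ q.1.2 ∧
      q'.1.1 = insert m q.1.1 ∧ q'.1.2 ⊆ q.1.2 ∩ Set.Ioi m := by
    rintro ⟨⟨E, Z⟩, hZM, hZi, hrej⟩
    have hrej' : ∀ s ∈ E.powerset, Rejects S Z s := by
      intro s hs; exact hrej s (Finset.mem_powerset.1 hs)
    obtain ⟨m, hmZ, Y, hYsub, hYinf, hY⟩ := lemB S E.powerset Z hZi hrej'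
    have hYZ : Y ⊆ Z := hYsub.trans Set.inter_subset_left
    refine ⟨⟨(insert m E, Y), hYZ.trans hZM, hYinf, ?_⟩, m, hmZ, rfl, hYsub⟩
    intro s hs
    by_cases hms : m ∈ s
    · have := hY (s.erase m) (Finset.mem_powerset.2 (Finset.subset_insert_iff.1 hs))
      rwa [Finset.insert_erase hms] at this
    · exact rejects_mono S (hrej s (by
        intro x hx
        rcases Finset.mem_insert.1 (hs hx) with rfl | h
        · exact absurd hx hms
        · exact h)) hYZ
  choose Fstep mfun hmem hE hsub using step_ex
  have h0' : ∀ s ⊆ (∅ : Finset ℕ), Rejects S M s := by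
    intro s hs
    rw [Finset.subset_empty.1 hs]; exact h0
  set q0 : T := ⟨(∅, M), subset_rfl, hM, h0'⟩ with hq0
  set seq : ℕ → T := fun k => Fstep^[k] q0 with hseq
  have hseqsucc : ∀ k, seq (k + 1) = Fstep (seq k) := by
    intro k; simp [hseq, Function.iterate_succ_apply']
  set n : ℕ → ℕ := fun k => mfun (seq k) with hn
  have hnmem : ∀ k, n k ∈ (seq k).1.2 := fun k => hmem (seq k)
  have hEsucc : ∀ k, (seq (k + 1)).1.1 = insert (n k) (seq k).1.1 := by
    intro k; rw [hseqsucc k]; exact hE (seq k)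
  have hZsucc : ∀ k, (seq (k + 1)).1.2 ⊆ (seq k).1.2 ∩ Set.Ioi (n k) := by
    intro k; rw [hseqsucc k]; exact hsub (seq k)
  have hnlt : StrictMono n := by
    apply strictMono_nat_of_lt_succ
    intro k
    exact (hZsucc k (hnmem (k + 1))).2
  have hEmono : ∀ k j, k ≤ j → (seq k).1.1 ⊆ (seq j).1.1 := by
    intro k j hkj
    induction j with
    | zero => simp_all
    | succ j ih =>
      rcases Nat.lt_or_ge k (j + 1) with h | h
      · refine (ih (Nat.lt_succ_iff.1 h)).trans ?_
        rw [hEsucc j]; exact Finset.subset_insert _ _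
      · have : k = j + 1 := le_antisymm hkj h
        subst this; exact subset_rfl
  have hnE : ∀ j k, j < k → n j ∈ (seq k).1.1 := by
    intro j k hjk
    have h1 : n j ∈ (seq (j + 1)).1.1 := by
      rw [hEsucc j]; exact Finset.mem_insert_self _ _
    exact hEmono (j + 1) k hjk h1
  refine ⟨Set.range n, ?_, Set.infinite_range_of_injective hnlt.injective, ?_⟩
  · rintro x ⟨k, rfl⟩
    exact (seq k).2.1 (hnmem k)
  · intro t htS htN
    set k := t.sup id + 1 with hk
    have htE : t ⊆ (seq k).1.1 := by
      intro x hx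
      obtain ⟨j, rfl⟩ := htN hx
      refine hnE j k ?_
      have h1 : j ≤ n j := hnlt.le_apply
      have h2 : n j ≤ t.sup id := Finset.le_sup (f := id) hx
      omega
    exact (seq k).2.2.2 t htE (seq k).1.2 subset_rfl (seq k).2.2.1 (mem_accepts S htS)

lemma galvin (M : Set ℕ) (hM : M.Infinite) :
    ∃ N : Set ℕ, N ⊆ M ∧ N.Infinite ∧
      ((∀ t ∈ S, ¬ ↑t ⊆ N) ∨
        ∀ A : Set ℕ, A ⊆ N → A.Infinite → ∃ p : Finset ℕ, Pfx p A ∧ p ∈ S) := by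
  by_cases h0 : Rejects S M ∅
  · obtain ⟨N, h1, h2, h3⟩ := buildN S M hM h0
    exact ⟨N, h1, h2, Or.inl h3⟩
  · rw [Rejects] at h0
    push_neg at h0
    obtain ⟨N, hNM, hNi, hNacc⟩ := h0
    refine ⟨N, hNM, hNi, Or.inr ?_⟩
    intro A hAN hAi
    obtain ⟨p, hp, hpS⟩ := hNacc A hAN hAi (by simp)
    exact ⟨p, hp, by simpa using hpS⟩


/-- two compact hereditary families are ⊆-comparable after restriction. -/
theorem compact_hereditary_comparable (F G : Set (Finset ℕ))
    (hFc : IsCompactFam F) (hFh : Hered F) (hGc : IsCompactFam G) (hGh : Hered G) :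
    ∃ M : Set ℕ, M.Infinite ∧ (Restr F M ⊆ Restr G M ∨ Restr G M ⊆ Restr F M) := by
  obtain ⟨N, -, hNi, hcase⟩ := galvin {s : Finset ℕ | s ∈ F ∧ s ∉ G} Set.univ
    Set.infinite_univ
  refine ⟨N, hNi, ?_⟩
  rcases hcase with h | h
  · left
    rintro s ⟨hsF, hsN⟩
    refine ⟨?_, hsN⟩
    by_contra hsG
    exact h s ⟨hsF, hsG⟩ hsN
  · right
    rintro t ⟨htG, htN⟩
    refine ⟨?_, htN⟩
    set A : Set ℕ := ↑t ∪ (N ∩ Set.Ioi (t.sup id)) with hA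
    have hAN : A ⊆ N := by
      rintro x (hx | hx)
      · exact htN hx
      · exact hx.1
    have hAinf : A.Infinite := by
      have h1 : N \ Set.Iic (t.sup id) ⊆ A := by
        rintro x ⟨hx1, hx2⟩
        exact Or.inr ⟨hx1, by simpa using hx2⟩
      exact (hNi.diff (Set.finite_Iic _)).mono h1
    obtain ⟨p, hp, hpF, hpG⟩ := h A hAN hAinf
    have htpfx : Pfx t A := by
      constructor
      · exact Set.subset_union_left
      · rintro x (hx | hx) hxt y hy
        · exact absurd hx hxt
        · have : y ≤ t.sup id := Finset.le_sup (f := id) hy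
          have : t.sup id < x := hx.2
          omega
    rcases pfx_comp hp htpfx with hsub | hsub
    · exact absurd (hGh hsub htG) hpG
    · exact hFh hsub hpF
end GalvinAux
end

section
/- If F is a compact hereditary family of finite subsets of ℕ and M is an infinite set such that Ad(F)↾M is homogeneous on M, then ι(F) ≤ ι(Ad(F)↾M) ≤ 2·ι(F). -/
open Set

namespace AdIdx0




lemma chi_injective : Function.Injective chi := by
  intro s t h
  ext n
  have := congrFun h n
  simpa [chi, decide_eq_decide] using this

lemma chi_apply {s : Finset ℕ} {n : ℕ} : chi s n = true ↔ n ∈ s := by simp [chi]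

def ItpAux (lo : ℕ) : List ℕ → List ℕ → Prop
  | [], [] => True
  | a :: t, b :: s => lo ≤ a ∧ a ≤ b ∧ ItpAux (b+1) t s
  | _, _ => False

lemma itpAux_iff (t : List ℕ) : ∀ (s : List ℕ) (lo : ℕ),
    ItpAux lo t s ↔ (List.Forall₂ (· ≤ ·) t s ∧ List.Forall₂ (· < ·) s.dropLast t.tail ∧
      ∀ a, t.head? = some a → lo ≤ a) := by
  induction t with
  | nil =>
    intro s lo
    cases s with
    | nil => simp [ItpAux]
    | cons b s' => simp [ItpAux]
  | cons a t' ih =>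
    intro s lo
    cases s with
    | nil => simp [ItpAux]
    | cons b s' =>
      rw [show ItpAux lo (a :: t') (b :: s') = (lo ≤ a ∧ a ≤ b ∧ ItpAux (b+1) t' s') from rfl]
      rw [ih s' (b+1)]
      cases s' with
      | nil =>
        constructor
        · rintro ⟨h1, h2, h3, _, _⟩
          have ht' : t' = [] := by simpa using h3
          subst ht'
          simp_all [List.forall₂_cons]
        · rintro ⟨h1, h2, h3⟩
          have ht' : t' = [] := by
            rcases h1 with _ | ⟨_, h⟩
            simpa using List.Forall₂.length_eq h
          subst ht'
          rcases h1 with _ | ⟨hab, _⟩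
          exact ⟨h3 a rfl, hab, by simp, by simp, by simp⟩
      | cons b2 s'' =>
        constructor
        · rintro ⟨h1, h2, h3, h4, h5⟩
          rcases t' with _ | ⟨a2, t''⟩
          · exact absurd (List.Forall₂.length_eq h3) (by simp)
          · refine ⟨List.Forall₂.cons h2 h3, ?_, fun x hx => by simpa using h1.trans (by injection hx with h; omega)⟩
            rw [List.dropLast_cons_of_ne_nil (by simp)]
            refine List.Forall₂.cons ?_ h4
            have := h5 a2 rfl
            omega
        · rintro ⟨h1, h2, h3⟩
          rcases h1 with _ | ⟨hab, h1'⟩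
          rcases t' with _ | ⟨a2, t''⟩
          · exact absurd (List.Forall₂.length_eq h1') (by simp)
          · rw [List.dropLast_cons_of_ne_nil (by simp)] at h2
            rcases h2 with _ | ⟨hb, h2'⟩
            exact ⟨h3 a rfl, hab, h1', h2', fun x hx => by injection hx with h; omega⟩

lemma interpolates_iff {t s : Finset ℕ} :
    Interpolates t s ↔ ItpAux 0 (t.sort (· ≤ ·)) (s.sort (· ≤ ·)) := by
  rw [Interpolates, itpAux_iff]
  simp


lemma itpAux_length : ∀ {t s : List ℕ} {lo : ℕ}, ItpAux lo t s → t.length = s.length := by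
  intro t
  induction t with
  | nil => intro s lo h; cases s with
    | nil => rfl
    | cons b s' => exact absurd h (by simp [ItpAux])
  | cons a t' ih => intro s lo h; cases s with
    | nil => exact absurd h (by simp [ItpAux])
    | cons b s' => simpa using ih h.2.2

lemma itpAux_mono : ∀ {t s : List ℕ} {lo lo' : ℕ}, lo ≤ lo' → ItpAux lo' t s → ItpAux lo t s := by
  intro t
  induction t with
  | nil => intro s lo lo' _ h; cases s with
    | nil => trivial
    | cons b s' => exact absurd h (by simp [ItpAux])
  | cons a t' _ => intro s lo lo' hle h; cases s with
    | nil => exact absurd h (by simp [ItpAux])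
    | cons b s' => exact ⟨hle.trans h.1, h.2⟩

lemma itpAux_le_elem : ∀ {t s : List ℕ} {lo : ℕ}, ItpAux lo t s → ∀ x ∈ t, lo ≤ x := by
  intro t
  induction t with
  | nil => simp
  | cons a t' ih => intro s lo h x hx; cases s with
    | nil => exact absurd h (by simp [ItpAux])
    | cons b s' =>
      obtain ⟨h1, h2, h3⟩ := h
      rcases List.mem_cons.1 hx with rfl | hx'
      · exact h1
      · exact le_trans (by omega) (ih h3 x hx')

lemma itpAux_exists_ge : ∀ {t s : List ℕ} {lo : ℕ}, ItpAux lo t s → ∀ x ∈ t, ∃ b ∈ s, x ≤ b := by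
  intro t
  induction t with
  | nil => simp
  | cons a t' ih => intro s lo h x hx; cases s with
    | nil => exact absurd h (by simp [ItpAux])
    | cons b s' =>
      rcases List.mem_cons.1 hx with rfl | hx'
      · exact ⟨b, by simp, h.2.1⟩
      · obtain ⟨c, hc, hxc⟩ := ih h.2.2 x hx'
        exact ⟨c, by simp [hc], hxc⟩

lemma itpAux_sublist : ∀ {t s s' : List ℕ} {lo : ℕ}, ItpAux lo t s → s'.Sublist s →
    ∃ t', t'.Sublist t ∧ ItpAux lo t' s' := by
  intro t
  induction t with
  | nil => intro s s' lo h hsub; cases s with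
    | nil => exact ⟨[], by simp, by cases (List.sublist_nil.1 hsub); trivial⟩
    | cons b s2 => exact absurd h (by simp [ItpAux])
  | cons a t' ih => intro s s' lo h hsub; cases s with
    | nil => exact absurd h (by simp [ItpAux])
    | cons b s2 =>
      obtain ⟨hlo, hab, h'⟩ := h
      cases hsub with
      | cons _ hsub' =>
        -- s' <+ s2
        obtain ⟨u, hu, hitp⟩ := ih h' hsub'
        exact ⟨u, hu.trans (List.sublist_cons_self a t'), itpAux_mono (by omega) hitp⟩
      | cons_cons _ hsub' =>
        obtain ⟨u, hu, hitp⟩ := ih h' hsub'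
        exact ⟨a :: u, List.Sublist.cons₂ a hu, hlo, hab, hitp⟩

lemma itpAux_append_single : ∀ {t s : List ℕ} {lo e c : ℕ}, ItpAux lo t s →
    (∀ b ∈ s, b < e) → lo ≤ e → e ≤ c → ItpAux lo (t ++ [e]) (s ++ [c]) := by
  intro t
  induction t with
  | nil => intro s lo e c h hbig hlo hec; cases s with
    | nil => exact ⟨hlo, hec, trivial⟩
    | cons b s' => exact absurd h (by simp [ItpAux])
  | cons a t' ih => intro s lo e c h hbig hlo hec; cases s with
    | nil => exact absurd h (by simp [ItpAux])
    | cons b s' =>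
      exact ⟨h.1, h.2.1, ih h.2.2 (fun x hx => hbig x (by simp [hx]))
        (by have := hbig b (by simp); omega) hec⟩

lemma itpAux_split : ∀ {s1 : List ℕ} {t s2 : List ℕ} {lo : ℕ}, ItpAux lo t (s1 ++ s2) →
    ∃ t1 t2, t = t1 ++ t2 ∧ t1.length = s1.length ∧ ItpAux lo t1 s1 ∧
      (∀ x ∈ t2, ∀ b ∈ s1, b < x) := by
  intro s1
  induction s1 with
  | nil => intro t s2 lo h; exact ⟨[], t, by simp, by simp, trivial, by simp⟩
  | cons b s1' ih =>
    intro t s2 lo h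
    cases t with
    | nil => exact absurd h (by simp [ItpAux])
    | cons a t' =>
      obtain ⟨hlo, hab, h'⟩ := h
      obtain ⟨t1, t2, ht, hlen, hitp, hgt⟩ := ih h'
      refine ⟨a :: t1, t2, by simp [ht], by simp [hlen], ⟨hlo, hab, hitp⟩, ?_⟩
      intro x hx c hc
      rcases List.mem_cons.1 hc with rfl | hc'
      · have : x ∈ t' := by rw [ht]; exact List.mem_append_right _ hx
        have := itpAux_le_elem h' x this
        omega
      · exact hgt x hx c hc'


lemma toFinset_sort {l : List ℕ} (h : l.Pairwise (· < ·)) :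
    l.toFinset.sort (· ≤ ·) = l :=
  (List.toFinset_sort _ h.nodup).2 (h.imp le_of_lt)

lemma sublist_of_subset_sorted : ∀ {l1 l2 : List ℕ}, l1.Pairwise (· < ·) → l2.Pairwise (· < ·) →
    (∀ x ∈ l1, x ∈ l2) → l1.Sublist l2 := by
  intro l1
  induction l1 with
  | nil => simp
  | cons a l1' ih =>
    intro l2 h1 h2 hsub
    induction l2 with
    | nil => exact absurd (hsub a (by simp)) (by simp)
    | cons b l2' ih2 =>
      rcases List.mem_cons.1 (hsub a (by simp)) with rfl | hmem
      · refine List.Sublist.cons₂ a (ih h1.of_cons h2.of_cons ?_)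
        intro x hx
        have hx2 := hsub x (by simp [hx])
        rcases List.mem_cons.1 hx2 with rfl | h
        · exact absurd (List.rel_of_pairwise_cons h1 hx) (lt_irrefl x)
        · exact h
      · refine List.Sublist.cons b (ih2 h2.of_cons ?_)
        intro x hx
        rcases List.mem_cons.1 (hsub x hx) with rfl | h
        · -- x = b, but b < a... a ∈ l2', b < a contradiction? b appears before a in l2: b < a.
          -- x ∈ a :: l1', x = b. If x = a then a = b, but hmem : a ∈ l2' with b < a... fine no contra needed?
          -- We need x ∈ l2'. x = b. hx : x ∈ a :: l1'.
          rcases List.mem_cons.1 hx with rfl | hxl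
          · -- a = b contradicts hmem? hmem : a ∈ l2', h2 sorted: b < a = b false
            exact absurd (List.rel_of_pairwise_cons h2 hmem) (lt_irrefl x)
          · -- x = b ∈ l1', so a < x; also x = b < a since hmem: b < a. contra
            have h1x := List.rel_of_pairwise_cons h1 hxl
            have h2a := List.rel_of_pairwise_cons h2 hmem
            omega
        · exact h

lemma sort_union_append {s e : Finset ℕ} (h : ∀ a ∈ s, ∀ b ∈ e, a < b) :
    (s ∪ e).sort (· ≤ ·) = s.sort (· ≤ ·) ++ e.sort (· ≤ ·) := by
  have hd : ∀ x, x ∈ s.sort (· ≤ ·) → x ∈ e.sort (· ≤ ·) → False := by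
    intro x hx1 hx2
    exact lt_irrefl x (h x (by simpa using hx1) x (by simpa using hx2))
  have hnodup : (s.sort (· ≤ ·) ++ e.sort (· ≤ ·)).Nodup := by
    refine List.Nodup.append (Finset.sort_nodup _ _) (Finset.sort_nodup _ _) ?_
    intro x hx hy
    exact hd x hx hy
  have hsorted : (s.sort (· ≤ ·) ++ e.sort (· ≤ ·)).Pairwise (· ≤ ·) := by
    rw [List.pairwise_append]
    exact ⟨Finset.pairwise_sort _ _, Finset.pairwise_sort _ _,
      fun x hx y hy => le_of_lt (h x (by simpa using hx) y (by simpa using hy))⟩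
  refine List.Perm.eq_of_pairwise' (Finset.pairwise_sort _ _) hsorted ?_
  rw [List.perm_ext_iff_of_nodup (Finset.sort_nodup _ _) hnodup]
  intro x
  simp [Finset.mem_sort, List.mem_append]

lemma sort_insert {s : Finset ℕ} {e : ℕ} (h : ∀ b ∈ s, b < e) :
    (insert e s).sort (· ≤ ·) = s.sort (· ≤ ·) ++ [e] := by
  have : insert e s = s ∪ {e} := by
    ext x; simp [or_comm]
  rw [this, sort_union_append (by simpa using h), Finset.sort_singleton]




abbrev XX := ℕ → Bool

def cyl (x : XX) (R : ℕ) : Set XX := {y | ∀ n < R, y n = x n}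

lemma self_mem_cyl (x : XX) (R : ℕ) : x ∈ cyl x R := fun _ _ => rfl

lemma cyl_eq (x : XX) (R : ℕ) :
    cyl x R = ⋂ n ∈ Finset.range R, (fun y : XX => y n) ⁻¹' {x n} := by
  ext y; simp [cyl]

lemma isOpen_cyl (x : XX) (R : ℕ) : IsOpen (cyl x R) := by
  rw [cyl_eq]
  exact isOpen_biInter_finset fun n _ => (continuous_apply n).isOpen_preimage _ (isOpen_discrete _)

lemma isClosed_cyl (x : XX) (R : ℕ) : IsClosed (cyl x R) := by
  rw [cyl_eq]
  exact isClosed_biInter fun n _ => (isClosed_discrete _).preimage (continuous_apply n)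

lemma cyl_mem_nhds (x : XX) (R : ℕ) : cyl x R ∈ nhds x :=
  (isOpen_cyl x R).mem_nhds (self_mem_cyl x R)

lemma exists_cyl_subset {x : XX} {U : Set XX} (hU : U ∈ nhds x) : ∃ R, cyl x R ⊆ U := by
  obtain ⟨V, hVU, hV, hxV⟩ := mem_nhds_iff.1 hU
  obtain ⟨I, u, hu, hpi⟩ := isOpen_pi_iff.1 hV x hxV
  refine ⟨I.sup (· + 1), fun y hy => hVU (hpi ?_)⟩
  intro a ha
  have : a < I.sup (· + 1) := lt_of_lt_of_le (Nat.lt_succ_self a) (Finset.le_sup (f := (· + 1)) ha)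
  rw [hy a this]
  exact (hu a (by exact_mod_cast ha)).2

lemma mem_derivedSet_iff {x : XX} {D : Set XX} :
    x ∈ derivedSet D ↔ ∀ R, ∃ y ∈ D, y ≠ x ∧ y ∈ cyl x R := by
  constructor
  · intro h R
    obtain ⟨y, ⟨hy1, hy2⟩, hy3⟩ := accPt_iff_nhds.1 h (cyl x R) (cyl_mem_nhds x R)
    exact ⟨y, hy2, hy3, hy1⟩
  · intro h
    rw [derivedSet, mem_setOf_eq, accPt_iff_nhds]
    intro U hU
    obtain ⟨R, hR⟩ := exists_cyl_subset hU
    obtain ⟨y, hyD, hyne, hycyl⟩ := h R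
    exact ⟨y, ⟨hR hycyl, hyD⟩, hyne⟩

lemma mem_closure_iff_cyl {x : XX} {D : Set XX} :
    x ∈ closure D ↔ ∀ R, ∃ y ∈ D, y ∈ cyl x R := by
  rw [mem_closure_iff_nhds]
  constructor
  · intro h R
    obtain ⟨y, hy1, hy2⟩ := h _ (cyl_mem_nhds x R)
    exact ⟨y, hy2, hy1⟩
  · intro h U hU
    obtain ⟨R, hR⟩ := exists_cyl_subset hU
    obtain ⟨y, hyD, hycyl⟩ := h R
    exact ⟨y, hR hycyl, hyD⟩

-- iterDeriv lemmas
section IterDeriv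
variable {Y : Type} [TopologicalSpace Y]

lemma iterDeriv_zero (A : Set Y) : iterDeriv A 0 = A := Ordinal.limitRecOn_zero ..

lemma iterDeriv_succ (A : Set Y) (o : Ordinal) :
    iterDeriv A (Order.succ o) = derivedSet (iterDeriv A o) := Ordinal.limitRecOn_succ ..

lemma iterDeriv_limit (A : Set Y) {o : Ordinal} (ho : Order.IsSuccLimit o) :
    iterDeriv A o = ⋂ (b : Iio o), iterDeriv A b := Ordinal.limitRecOn_limit _ _ _ _ ho

lemma iterDeriv_mono {A B : Set Y} (h : A ⊆ B) : ∀ o, iterDeriv A o ⊆ iterDeriv B o := by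
  intro o
  induction o using Ordinal.induction with
  | _ o ih =>
    rcases Ordinal.zero_or_succ_or_isSuccLimit o with rfl | ⟨p, rfl⟩ | hl
    · simpa [iterDeriv_zero] using h
    · rw [← Ordinal.add_one_eq_succ] at *
      simp only [Ordinal.add_one_eq_succ, iterDeriv_succ]
      exact derivedSet_mono _ _ (ih p (Order.lt_succ p))
    · rw [iterDeriv_limit A hl, iterDeriv_limit B hl]
      exact iInter_mono fun b => ih b b.2

lemma iterDeriv_isClosed_and_subset {A : Set Y} [T1Space Y] (hA : IsClosed A) :
    ∀ o, IsClosed (iterDeriv A o) ∧ iterDeriv A o ⊆ A := by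
  intro o
  induction o using Ordinal.induction with
  | _ o ih =>
    rcases Ordinal.zero_or_succ_or_isSuccLimit o with rfl | ⟨p, rfl⟩ | hl
    · rw [iterDeriv_zero]; exact ⟨hA, subset_rfl⟩
    · obtain ⟨hc, hs⟩ := ih p (Order.lt_succ p)
      rw [iterDeriv_succ]
      refine ⟨isClosed_derivedSet _, ?_⟩
      calc derivedSet (iterDeriv A p) ⊆ closure (iterDeriv A p) := derivedSet_subset_closure _
        _ = iterDeriv A p := hc.closure_eq
        _ ⊆ A := hs
    · rw [iterDeriv_limit A hl]
      refine ⟨isClosed_iInter fun b => (ih b b.2).1, ?_⟩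
      intro x hx
      have h0 : (0 : Ordinal) < o := hl.pos
      exact (ih 0 h0).2 (mem_iInter.1 hx ⟨0, h0⟩)

lemma iterDeriv_antitone {A : Set Y} [T1Space Y] (hA : IsClosed A) :
    ∀ {o o' : Ordinal}, o ≤ o' → iterDeriv A o' ⊆ iterDeriv A o := by
  intro o o' h
  induction o' using Ordinal.induction with
  | _ o' ih =>
    rcases eq_or_lt_of_le h with rfl | hlt
    · exact subset_rfl
    rcases Ordinal.zero_or_succ_or_isSuccLimit o' with rfl | ⟨p, rfl⟩ | hl
    · exact absurd hlt (by simp : ¬ o < 0)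
    · have hop : o ≤ p := Order.lt_succ_iff.1 hlt
      rw [iterDeriv_succ]
      refine subset_trans ?_ (ih p (Order.lt_succ p) hop)
      calc derivedSet (iterDeriv A p) ⊆ closure (iterDeriv A p) := derivedSet_subset_closure _
        _ = iterDeriv A p := (iterDeriv_isClosed_and_subset hA p).1.closure_eq
    · rw [iterDeriv_limit A hl]
      exact iInter_subset _ (⟨o, hlt⟩ : Iio o')

end IterDeriv




lemma not_countable_XX : ¬ (Countable XX) := by
  intro h
  have h1 : Cardinal.mk XX ≤ Cardinal.aleph0 := Cardinal.mk_le_aleph0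
  have h2 : Cardinal.mk XX = 2 ^ Cardinal.aleph0 := by
    rw [← Cardinal.mk_nat, ← Cardinal.mk_bool, Cardinal.power_def]
  have := Cardinal.cantor Cardinal.aleph0
  rw [h2] at h1
  exact absurd (this.trans_le h1) (lt_irrefl _)

lemma exists_accPt_of_infinite {T : Set XX} (hT : T.Infinite) : ∃ y, AccPt y (Filter.principal T) := by
  by_contra h
  push_neg at h
  have hU : ∀ y : XX, ∃ U ∈ nhds y, ∀ z, z ∈ U ∩ T → z = y := by
    intro y
    have := h y
    rw [accPt_iff_nhds] at this
    push_neg at this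
    obtain ⟨U, hU, hU2⟩ := this
    exact ⟨U, hU, fun z hz => hU2 z hz⟩
  choose U hUmem hUsmall using hU
  obtain ⟨t, _, ht⟩ := isCompact_univ.elim_nhds_subcover U (fun y _ => hUmem y)
  refine hT ((t.finite_toSet).subset ?_)
  intro z hz
  obtain ⟨y, hy, hzy⟩ := Set.mem_iUnion₂.1 (ht (mem_univ z))
  have := hUsmall y z ⟨hzy, hz⟩
  subst this
  exact hy

lemma scat {A : Set XX} (hA : IsClosed A) (hcnt : A.Countable) : ∃ o, iterDeriv A o = ∅ := by
  by_contra hne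
  push_neg at hne
  rcases Classical.em (∃ o, iterDeriv A (Order.succ o) = iterDeriv A o) with ⟨o, ho⟩ | hstab
  · set D := iterDeriv A o with hD
    have hclosed : IsClosed D := (iterDeriv_isClosed_and_subset hA o).1
    have hperf : Perfect D := by
      refine ⟨hclosed, fun x hx => ?_⟩
      have : x ∈ derivedSet D := by
        rw [← ho, iterDeriv_succ A o] at hx
        exact hx
      exact this
    have hDne : D.Nonempty := hne o
    letI := TopologicalSpace.upgradeIsCompletelyMetrizable XX
    obtain ⟨f, hrange, _, hinj⟩ := hperf.exists_nat_bool_injection hDne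
    have hc : (Set.range f).Countable :=
      hcnt.mono (hrange.trans (iterDeriv_isClosed_and_subset hA o).2)
    have : Countable XX := by
      have h1 : Countable (Set.range f) := Set.countable_coe_iff.mpr hc
      exact Countable.of_equiv _ (Equiv.ofInjective f hinj).symm
    exact not_countable_XX this
  · push_neg at hstab
    have hproper : ∀ o : Ordinal.{0}, ∃ x, x ∈ iterDeriv A o ∧ x ∉ iterDeriv A (Order.succ o) := by
      intro o
      have hsub : iterDeriv A (Order.succ o) ⊆ iterDeriv A o :=
        iterDeriv_antitone hA (Order.le_succ o)
      by_contra h2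
      push_neg at h2
      exact hstab o (Subset.antisymm hsub h2)
    choose x hx1 hx2 using hproper
    have hxinj : Function.Injective x := by
      intro o o' hEq
      by_contra hneq
      rcases Ne.lt_or_gt hneq with hlt | hlt
      · exact hx2 o (hEq ▸ iterDeriv_antitone hA (Order.succ_le_of_lt hlt) (hx1 o'))
      · exact hx2 o' (hEq ▸ iterDeriv_antitone hA (Order.succ_le_of_lt hlt) (hx1 o))
    set c := Cardinal.mk XX
    set O := (Order.succ c).ord with hO
    have e := Ordinal.ToType.mk (o := O)
    set g : O.ToType → XX := fun i => x ((e.symm i : ↑(Set.Iio O)) : Ordinal) with hg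
    have hginj : Function.Injective g := by
      intro i j hij
      have := hxinj hij
      have h2 : e.symm i = e.symm j := Subtype.ext this
      simpa using congrArg e h2
    have hcard := Cardinal.mk_le_of_injective hginj
    rw [Cardinal.mk_ord_toType] at hcard
    exact absurd hcard (not_le.2 (Order.lt_succ c))


-- ===== helpers and main claims (to be filled) =====

def WB (m : Finset ℕ) : ℕ := m.sup id + 1

lemma lt_WB {m : Finset ℕ} {b : ℕ} (hb : b ∈ m) : b < WB m := by
  have : b ≤ m.sup id := Finset.le_sup (f := id) hb
  simpa [WB] using Nat.lt_succ_of_le this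

lemma chi_mem_cyl_iff {s m : Finset ℕ} {R : ℕ} :
    chi s ∈ cyl (chi m) R ↔ ∀ n < R, (n ∈ s ↔ n ∈ m) := by
  simp only [cyl, mem_setOf_eq, chi, decide_eq_decide]

lemma interp_length {t m : Finset ℕ} (h : Interpolates t m) : t.card = m.card := by
  have := itpAux_length (interpolates_iff.1 h)
  simpa [Finset.length_sort] using this

lemma interp_nil {m : Finset ℕ} (h : Interpolates ∅ m) : m = ∅ := by
  have := interp_length h
  simp at this
  exact Finset.card_eq_zero.1 this.symm

lemma interp_bound {t m : Finset ℕ} (h : Interpolates t m) : ∀ a ∈ t, ∃ b ∈ m, a ≤ b := by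
  intro a ha
  obtain ⟨b, hb, hab⟩ := itpAux_exists_ge (interpolates_iff.1 h) a (by
    simpa [Finset.mem_sort] using ha)
  exact ⟨b, by simpa [Finset.mem_sort] using hb, hab⟩

lemma interp_finite (m : Finset ℕ) : {t : Finset ℕ | Interpolates t m}.Finite := by
  refine Set.Finite.subset (Finset.range (WB m)).powerset.finite_toSet ?_
  intro t ht
  simp only [Finset.coe_powerset, Set.mem_preimage, Set.mem_powerset_iff,
    Finset.coe_range]
  intro a ha
  obtain ⟨b, hb, hab⟩ := interp_bound ht a ha
  exact Set.mem_Iio.2 (lt_of_le_of_lt hab (lt_WB hb))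

lemma hered_Ad {F : Set (Finset ℕ)} (hF : Hered F) : Hered (Ad F) := by
  intro s' s hsub hs
  obtain ⟨t, htF, hint⟩ := hs
  rw [interpolates_iff] at hint
  have hsl : (s'.sort (· ≤ ·)).Sublist (s.sort (· ≤ ·)) :=
    sublist_of_subset_sorted ((Finset.sortedLT_sort s').pairwise) (Finset.sortedLT_sort s).pairwise
      (fun x hx => (Finset.mem_sort _).2 (hsub ((Finset.mem_sort _).1 hx)))
  obtain ⟨lt', hlt'sub, hitp⟩ := itpAux_sublist hint hsl
  have hlt'sorted : lt'.Pairwise (· < ·) := List.Pairwise.sublist hlt'sub (Finset.sortedLT_sort t).pairwise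
  refine ⟨lt'.toFinset, hF ?_ htF, ?_⟩
  · intro x hx
    rw [List.mem_toFinset] at hx
    exact (Finset.mem_sort _).1 (hlt'sub.subset hx)
  · rw [interpolates_iff, toFinset_sort hlt'sorted]
    exact hitp

lemma mask_rank {H : Set (Finset ℕ)} (hH : Hered H) :
    ∀ o : Ordinal.{0}, ∀ x ∈ iterDeriv (chi '' H) o, ∀ c : Finset ℕ, (∀ n ∈ c, x n = true) →
      (fun n => if n ∈ c then false else x n) ∈ iterDeriv (chi '' H) o := by
  intro o
  induction o using Ordinal.induction with
  | _ o ih =>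
    rcases Ordinal.zero_or_succ_or_isSuccLimit o with rfl | ⟨p, rfl⟩ | hl
    · rw [iterDeriv_zero]
      rintro x ⟨t, htH, rfl⟩ c hc
      refine ⟨t \ c, hH (Finset.sdiff_subset) htH, ?_⟩
      funext n
      by_cases h : n ∈ c
      · simp [chi, h, Finset.mem_sdiff]
      · simp [chi, h, Finset.mem_sdiff]
    · intro x hx c hc
      rw [iterDeriv_succ, mem_derivedSet_iff]
      intro R
      set R' := max R (WB c) with hR'
      obtain ⟨y, hyD, hyne, hycyl⟩ := mem_derivedSet_iff.1 (by rwa [iterDeriv_succ] at hx) R'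
      have hyc : ∀ n ∈ c, y n = true := fun n hn => by
        rw [hycyl n (lt_of_lt_of_le (lt_WB hn) (le_max_right _ _))]; exact hc n hn
      refine ⟨_, ih p (Order.lt_succ p) y hyD c hyc, ?_, ?_⟩
      · intro hEq
        apply hyne
        funext n
        by_cases h : n ∈ c
        · exact (hyc n h).trans (hc n h).symm
        · have := congrFun hEq n
          simpa [h] using this
      · intro n hn
        by_cases h : n ∈ c
        · simp [h]
        · simpa [h] using hycyl n (lt_of_lt_of_le hn (le_max_left _ _))
    · intro x hx c hc
      rw [iterDeriv_limit _ hl] at hx ⊢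
      rw [mem_iInter] at hx ⊢
      exact fun b => ih b b.2 x (hx b) c hc

lemma subset_rank {H : Set (Finset ℕ)} (hH : Hered H) :
    ∀ (o : Ordinal.{0}) {v u : Finset ℕ}, chi v ∈ iterDeriv (chi '' H) o → u ⊆ v →
      chi u ∈ iterDeriv (chi '' H) o := by
  intro o v u hv huv
  have hmask := mask_rank hH o _ hv (v \ u)
    (fun n hn => chi_apply.2 (Finset.mem_sdiff.1 hn).1)
  have heq : (fun n => if n ∈ v \ u then false else chi v n) = chi u := by
    funext n
    by_cases h : n ∈ v \ u
    · rw [Finset.mem_sdiff] at h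
      simp [chi, h, h.2]
    · rw [Finset.mem_sdiff] at h
      push_neg at h
      by_cases hnv : n ∈ v
      · simp [chi, Finset.mem_sdiff, hnv, h hnv]
      · have hnu : n ∉ u := fun hu => hnv (huv hu)
        simp [chi, Finset.mem_sdiff, hnv, hnu]
  rwa [heq] at hmask

lemma approx {D : Set XX} (hD : D ⊆ Set.range chi) {m : Finset ℕ}
    (h : chi m ∈ derivedSet D) (R : ℕ) (hR : ∀ b ∈ m, b < R) :
    ∃ m' : Finset ℕ, chi m' ∈ D ∧ m ⊆ m' ∧ m' ≠ m ∧ ∀ b ∈ m', b ∉ m → R ≤ b := by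
  obtain ⟨y, hyD, hyne, hycyl⟩ := mem_derivedSet_iff.1 h R
  obtain ⟨m', rfl⟩ := hD hyD
  have hag := chi_mem_cyl_iff.1 hycyl
  refine ⟨m', hyD, ?_, fun hEq => hyne (by rw [hEq]), ?_⟩
  · intro n hn
    exact (hag n (hR n hn)).2 hn
  · intro b hb hbn
    by_contra hlt
    exact hbn ((hag b (by omega)).1 hb)

lemma accPt_infinite_cyl {T : Set XX} {y : XX} (h : AccPt y (Filter.principal T)) (R : ℕ) :
    (T ∩ cyl y R).Infinite := by
  by_contra hfin
  rw [Set.not_infinite] at hfin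
  set T' := (T ∩ cyl y R) \ {y} with hT'
  have hT'fin : T'.Finite := hfin.subset diff_subset
  have hT'closed : IsClosed T' := hT'fin.isClosed
  have hyT' : y ∉ T' := fun hy => hy.2 rfl
  have hU : (cyl y R ∩ T'ᶜ) ∈ nhds y :=
    Filter.inter_mem (cyl_mem_nhds y R) (hT'closed.isOpen_compl.mem_nhds hyT')
  obtain ⟨w, ⟨hw1, hw2⟩, hwne⟩ := accPt_iff_nhds.1 h _ hU
  exact hw1.2 ⟨⟨hw2, hw1.1⟩, hwne⟩
lemma closed_Ad {F : Set (Finset ℕ)} (hFc : IsCompactFam F) (hFh : Hered F) :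
    IsClosed (chi '' Ad F) := by
  rw [← closure_subset_iff_isClosed]
  intro x hx
  by_cases hfin : {n | x n = true}.Finite
  · set sfin := hfin.toFinset with hsfin
    have hxchi : x = chi sfin := by
      funext n
      cases hv : x n <;> simp [chi, hsfin, Set.Finite.mem_toFinset, hv]
    obtain ⟨y, ⟨s', hs'Ad, rfl⟩, hycyl⟩ := mem_closure_iff_cyl.1 hx (WB sfin)
    rw [hxchi] at hycyl ⊢
    have hsub : sfin ⊆ s' := fun n hn => (chi_mem_cyl_iff.1 hycyl n (lt_WB hn)).2 hn
    exact ⟨sfin, hered_Ad hFh hsub hs'Ad, rfl⟩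
  · exfalso
    have hinf : {n | x n = true}.Infinite := hfin
    set e := Nat.nth (fun n => x n = true) with he
    have hemono : StrictMono e := Nat.nth_strictMono hinf
    have heP : ∀ k, x (e k) = true := fun k => Nat.nth_mem_of_infinite hinf k
    have hsortml : ∀ k : ℕ, ((List.range (k+1)).map e).Pairwise (· < ·) :=
      fun k => List.Pairwise.map e (fun a b hab => hemono hab) (List.pairwise_lt_range (n := k+1))
    have hmAd : ∀ k : ℕ, ((List.range (k+1)).map e).toFinset ∈ Ad F := by
      intro k
      obtain ⟨y, ⟨s', hs'Ad, rfl⟩, hycyl⟩ := mem_closure_iff_cyl.1 hx (e k + 1)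
      refine hered_Ad hFh ?_ hs'Ad
      intro n hn
      simp only [List.mem_toFinset, List.mem_map, List.mem_range] at hn
      obtain ⟨i, hik, rfl⟩ := hn
      have hei : e i ≤ e k := hemono.monotone (by omega)
      have := hycyl (e i) (by omega)
      rw [← chi_apply, this]
      exact heP i
    have hstep : ∀ k : ℕ, ∃ t : Finset ℕ, t ∈ F ∧
        ItpAux 0 (t.sort (· ≤ ·)) ((List.range (k+1)).map e) := by
      intro k
      obtain ⟨t, htF, hint⟩ := hmAd k
      rw [interpolates_iff, toFinset_sort (hsortml k)] at hint
      exact ⟨t, htF, hint⟩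
    choose t ht1 ht2 using hstep
    have hcard : ∀ k, (t k).card = k + 1 := by
      intro k
      have := itpAux_length (ht2 k)
      simpa [Finset.length_sort] using this
    have htinj : Function.Injective fun k => chi (t k) := by
      intro a b hab
      have := congrArg Finset.card (chi_injective hab)
      rw [hcard a, hcard b] at this
      omega
    obtain ⟨y, hy⟩ := exists_accPt_of_infinite (Set.infinite_range_of_injective htinj)
    have hyF : y ∈ chi '' F := by
      have h1 : y ∈ closure (Set.range fun k => chi (t k)) := by
        have : y ∈ derivedSet (Set.range fun k => chi (t k)) := hy
        exact derivedSet_subset_closure _ this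
      have h2 : Set.range (fun k => chi (t k)) ⊆ chi '' F :=
        Set.range_subset_iff.2 fun k => ⟨t k, ht1 k, rfl⟩
      have := (closure_mono h2) h1
      rwa [hFc.closure_eq] at this
    obtain ⟨tinf, htinfF, rfl⟩ := hyF
    have hkey : ∀ j : ℕ, j + 1 ≤ tinf.card := by
      intro j
      set W := e j + 1 with hW
      have hinfcyl := accPt_infinite_cyl hy W
      have hKinf : {k : ℕ | chi (t k) ∈ cyl (chi tinf) W}.Infinite := by
        refine Set.Infinite.of_image (fun k => chi (t k)) ?_
        refine Set.Infinite.mono ?_ hinfcyl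
        rintro z ⟨⟨k, rfl⟩, hz2⟩
        exact ⟨k, hz2, rfl⟩
      obtain ⟨k, hkK, hkj⟩ := hKinf.exists_gt j
      -- split the interpolant
      have hdecomp : (List.range (k+1)).map e =
          (List.range (j+1)).map e ++ ((List.range (k+1)).map e).drop (j+1) := by
        conv_lhs => rw [← List.take_append_drop (j+1) ((List.range (k+1)).map e)]
        congr 1
        rw [← List.map_take, List.take_range]
        congr 2
        omega
      obtain ⟨t1, t2, hts, hlen, hitp1, _⟩ := itpAux_split (by rw [← hdecomp]; exact ht2 k)
      have ht1mem : ∀ a ∈ t1, a < W := by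
        intro a ha
        obtain ⟨b, hb, hab⟩ := itpAux_exists_ge hitp1 a ha
        simp only [List.mem_map, List.mem_range] at hb
        obtain ⟨i, hij, rfl⟩ := hb
        have : e i ≤ e j := hemono.monotone (by omega)
        omega
      have ht1sub : t1.toFinset ⊆ tinf := by
        intro a ha
        rw [List.mem_toFinset] at ha
        have haW : a < W := ht1mem a ha
        have hatk : a ∈ t k := by
          have : a ∈ (t k).sort (· ≤ ·) := by
            rw [hts]; exact List.mem_append_left _ ha
          exact (Finset.mem_sort _).1 this
        exact (chi_mem_cyl_iff.1 hkK a haW).1 hatk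
      have ht1nodup : t1.Nodup := by
        have hsl : t1.Sublist ((t k).sort (· ≤ ·)) := by
          rw [hts]; exact List.sublist_append_left t1 t2
        exact hsl.nodup (Finset.sort_nodup _ _)
      have := Finset.card_le_card ht1sub
      rw [List.toFinset_card_of_nodup ht1nodup, hlen] at this
      simpa using this
    exact absurd (hkey tinf.card) (by omega)

lemma closed_Restr {H : Set (Finset ℕ)} (hH : IsClosed (chi '' H)) (M : Set ℕ) :
    IsClosed (chi '' Restr H M) := by
  have heq : chi '' Restr H M = (chi '' H) ∩ {x : XX | ∀ n, x n = true → n ∈ M} := by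
    ext x
    constructor
    · rintro ⟨s, ⟨hs, hsM⟩, rfl⟩
      exact ⟨⟨s, hs, rfl⟩, fun n hn => hsM (by simpa [chi_apply] using hn)⟩
    · rintro ⟨⟨s, hs, rfl⟩, hsupp⟩
      exact ⟨s, ⟨hs, fun n hn => hsupp n (chi_apply.2 hn)⟩, rfl⟩
  rw [heq]
  refine hH.inter ?_
  have : {x : XX | ∀ n, x n = true → n ∈ M} = ⋂ (n : ℕ), {x : XX | x n = true → n ∈ M} := by
    ext x; simp [Set.mem_iInter]
  rw [this]
  refine isClosed_iInter fun n => ?_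
  by_cases hn : n ∈ M
  · have : {x : XX | x n = true → n ∈ M} = univ := by ext x; simp [hn]
    rw [this]; exact isClosed_univ
  · have : {x : XX | x n = true → n ∈ M} = (fun x : XX => x n) ⁻¹' {false} := by
      ext x; cases hx : x n <;> simp [hx, hn]
    rw [this]
    exact (isClosed_discrete _).preimage (continuous_apply n)

section Main
variable {F : Set (Finset ℕ)} {M : Set ℕ}

lemma lowerClaim (hFh : Hered F) (hM : M.Infinite) (hAFcl : IsClosed (chi '' F)) :
    ∀ o : Ordinal.{0}, ∀ s m : Finset ℕ, chi s ∈ iterDeriv (chi '' F) o → ↑m ⊆ M →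
      Interpolates s m → chi m ∈ iterDeriv (chi '' Restr (Ad F) M) o := by
  intro o
  induction o using Ordinal.induction with
  | _ o ih =>
    rcases Ordinal.zero_or_succ_or_isSuccLimit o with rfl | ⟨p, rfl⟩ | hl
    · intro s m hs hm hint
      rw [iterDeriv_zero] at hs ⊢
      obtain ⟨s₀, hs₀, hEq⟩ := hs
      have hss : s₀ = s := chi_injective hEq
      subst hss
      exact ⟨m, ⟨⟨s₀, hs₀, hint⟩, hm⟩, rfl⟩
    · intro s m hs hm hint
      rw [iterDeriv_succ] at hs ⊢
      rw [mem_derivedSet_iff]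
      intro R
      set R' := max R (max (WB m) (WB s)) with hR'
      have hDsub : iterDeriv (chi '' F) p ⊆ Set.range chi :=
        subset_trans (iterDeriv_isClosed_and_subset hAFcl p).2 (image_subset_range _ _)
      obtain ⟨s', hs'D, hsub, hne, hnew⟩ := approx hDsub hs R'
        (fun b hb => lt_of_lt_of_le (lt_WB hb) (le_trans (le_max_right _ _) (le_max_right _ _)))
      have hex : ∃ e₁ ∈ s', e₁ ∉ s := by
        by_contra hcon
        push_neg at hcon
        exact hne (Finset.Subset.antisymm hcon hsub)
      obtain ⟨e₁, he₁s', he₁s⟩ := hex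
      have he₁R : R' ≤ e₁ := hnew e₁ he₁s' he₁s
      have hs'' : chi (insert e₁ s) ∈ iterDeriv (chi '' F) p :=
        subset_rank hFh p hs'D (Finset.insert_subset he₁s' hsub)
      obtain ⟨mp, hmpM, hmp⟩ := hM.exists_gt e₁
      have hmWB : WB m ≤ R' := le_trans (le_max_left _ _) (le_max_right _ _)
      have hsWB : WB s ≤ R' := le_trans (le_max_right _ _) (le_max_right _ _)
      have hltm : ∀ b ∈ m, b < e₁ := fun b hb => lt_of_lt_of_le (lt_WB hb) (le_trans hmWB he₁R)
      have hlts : ∀ b ∈ s, b < e₁ := fun b hb => lt_of_lt_of_le (lt_WB hb) (le_trans hsWB he₁R)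
      have hint'' : Interpolates (insert e₁ s) (insert mp m) := by
        rw [interpolates_iff, sort_insert hlts, sort_insert (fun b hb => lt_trans (hltm b hb) hmp)]
        exact itpAux_append_single (interpolates_iff.1 hint)
          (fun b hb => hltm b ((Finset.mem_sort _).1 hb)) (Nat.zero_le _) (le_of_lt hmp)
      have hmsub : ↑(insert mp m) ⊆ M := by
        rw [Finset.coe_insert]
        exact Set.insert_subset hmpM hm
      have hIH := ih p (Order.lt_succ p) (insert e₁ s) (insert mp m) hs'' hmsub hint''
      refine ⟨chi (insert mp m), hIH, ?_, ?_⟩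
      · intro hEq
        have := chi_injective hEq
        have hmpm : mp ∈ m := this ▸ Finset.mem_insert_self mp m
        exact absurd (lt_trans (hltm mp hmpm) hmp) (lt_irrefl mp)
      · intro n hn
        have hnmp : n ≠ mp := by
          have : n < mp := lt_of_lt_of_le hn (le_trans (le_max_left _ _) (le_of_lt (lt_of_le_of_lt he₁R hmp)))
          omega
        simp [chi, Finset.mem_insert, hnmp]
    · intro s m hs hm hint
      rw [iterDeriv_limit _ hl] at hs ⊢
      rw [mem_iInter] at hs ⊢
      exact fun b => ih b b.2 s m (hs b) hm hint


lemma pigeon {g : ℕ → Finset ℕ} {S : Set ℕ} (hS : S.Infinite) (hfin : (g '' S).Finite) :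
    ∃ b, (S ∩ g ⁻¹' {b}).Infinite := by
  by_contra hcon
  push_neg at hcon
  refine hS ?_
  have : S ⊆ ⋃ b ∈ g '' S, (S ∩ g ⁻¹' {b}) := by
    intro k hk
    exact Set.mem_biUnion ⟨k, hk, rfl⟩ ⟨hk, rfl⟩
  exact ((hfin.biUnion (fun b _ => hcon b)).subset this)

lemma sup_lt_of_forall {m : Finset ℕ} {a : ℕ} (hm : m.Nonempty) (h : ∀ b ∈ m, b < a) :
    WB m ≤ a := by
  obtain ⟨b, hb, hEq⟩ := Finset.exists_mem_eq_sup m hm id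
  have := h b hb
  simp only [WB, hEq, id_eq]
  omega

lemma claimB (hFh : Hered F) (hAFcl : IsClosed (chi '' F))
    (hAGcl : IsClosed (chi '' Restr (Ad F) M)) (γ : Ordinal.{0})
    (HA : ∀ m : Finset ℕ, m ≠ ∅ → chi m ∈ iterDeriv (chi '' Restr (Ad F) M) (2*γ) →
      ∃ t, chi t ∈ iterDeriv (chi '' F) γ ∧ Interpolates t m) :
    ∀ m : Finset ℕ, m ≠ ∅ → chi m ∈ iterDeriv (chi '' Restr (Ad F) M) (2*γ + 1) →
    ∃ u e, chi (insert e u) ∈ iterDeriv (chi '' F) γ ∧ Interpolates u m ∧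
      (∀ b ∈ m, b < e) ∧ (∀ a, a ∈ insert e u ∧ a < WB m ↔ a ∈ u ∧ a < WB m) := by
  intro m hm hmem
  rw [Ordinal.add_one_eq_succ, iterDeriv_succ] at hmem
  have hDsub : iterDeriv (chi '' Restr (Ad F) M) (2*γ) ⊆ Set.range chi :=
    subset_trans (iterDeriv_isClosed_and_subset hAGcl (2*γ)).2 (image_subset_range _ _)
  obtain ⟨m', hm'D, hsub, hne, hnew⟩ := approx hDsub hmem (WB m) (fun b hb => lt_WB hb)
  have hm'ne : m' ≠ ∅ := by
    intro hcon
    exact hm (Finset.subset_empty.1 (hcon ▸ hsub))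
  obtain ⟨t', ht'd, ht'i⟩ := HA m' hm'ne hm'D
  -- decompose m' = m ∪ (m' \ m)
  have hm'eq : m' = m ∪ (m' \ m) := (Finset.union_sdiff_of_subset hsub).symm
  have hsep : ∀ a ∈ m, ∀ b ∈ (m' \ m), a < b := by
    intro a ha b hb
    rw [Finset.mem_sdiff] at hb
    exact lt_of_lt_of_le (lt_WB ha) (hnew b hb.1 hb.2)
  have hsorteq : m'.sort (· ≤ ·) = m.sort (· ≤ ·) ++ (m' \ m).sort (· ≤ ·) := by
    conv_lhs => rw [hm'eq]
    exact sort_union_append hsep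
  rw [interpolates_iff, hsorteq] at ht'i
  obtain ⟨t1, t2, hts, hlen, hitp1, hgt⟩ := itpAux_split ht'i
  have ht2ne : t2 ≠ [] := by
    intro hcon
    have h1 := itpAux_length ht'i
    rw [hts, hcon] at h1
    simp only [List.append_nil, List.length_append] at h1
    have hdne : (m' \ m).sort (· ≤ ·) ≠ [] := by
      intro hc2
      have : m' \ m = ∅ := by
        have := congrArg List.toFinset hc2
        simpa [Finset.sort_toFinset] using this
      exact hne (Finset.Subset.antisymm (by rw [hm'eq, this]; simp) hsub)
    rw [hlen] at h1
    have := List.length_pos_iff.2 hdne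
    omega
  set e := t2.head ht2ne with he
  have het2 : e ∈ t2 := List.head_mem ht2ne
  have ht1sorted : t1.Pairwise (· < ·) := by
    refine List.Pairwise.sublist ?_ (Finset.sortedLT_sort t').pairwise
    rw [hts]; exact List.sublist_append_left t1 t2
  have ht1mlt : ∀ a ∈ t1, ∃ b ∈ m, a ≤ b := by
    intro a ha
    obtain ⟨b, hb, hab⟩ := itpAux_exists_ge hitp1 a ha
    exact ⟨b, (Finset.mem_sort _).1 hb, hab⟩
  have hue : ∀ b ∈ t1.toFinset, b < e := by
    intro b hb
    rw [List.mem_toFinset] at hb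
    obtain ⟨c, hc, hbc⟩ := ht1mlt b hb
    exact lt_of_le_of_lt hbc (hgt e het2 c ((Finset.mem_sort _).2 hc))
  have hsubt' : insert e t1.toFinset ⊆ t' := by
    intro a ha
    rw [Finset.mem_insert] at ha
    rcases ha with rfl | ha
    · refine (Finset.mem_sort (α := ℕ) (· ≤ ·)).1 ?_
      rw [hts]; exact List.mem_append_right t1 het2
    · rw [List.mem_toFinset] at ha
      refine (Finset.mem_sort (α := ℕ) (· ≤ ·)).1 ?_
      rw [hts]; exact List.mem_append_left t2 ha
  have hmle : ∀ b ∈ m, b < e := fun b hb => hgt e het2 b ((Finset.mem_sort _).2 hb)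
  refine ⟨t1.toFinset, e, subset_rank hFh γ ht'd hsubt', ?_, hmle, ?_⟩
  · rw [interpolates_iff, toFinset_sort ht1sorted]
    exact hitp1
  · intro a
    constructor
    · rintro ⟨ha, haW⟩
      rw [Finset.mem_insert] at ha
      rcases ha with rfl | ha
      · exfalso
        have := sup_lt_of_forall (Finset.nonempty_iff_ne_empty.2 hm) hmle
        omega
      · exact ⟨ha, haW⟩
    · rintro ⟨ha, haW⟩
      exact ⟨Finset.mem_insert_of_mem ha, haW⟩

lemma claimA (hFh : Hered F) (hAFcl : IsClosed (chi '' F))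
    (hAGcl : IsClosed (chi '' Restr (Ad F) M)) :
    ∀ γ : Ordinal.{0}, ∀ m : Finset ℕ, m ≠ ∅ →
      chi m ∈ iterDeriv (chi '' Restr (Ad F) M) (2 * γ) →
      ∃ t, chi t ∈ iterDeriv (chi '' F) γ ∧ Interpolates t m := by
  intro γ
  induction γ using Ordinal.induction with
  | _ γ ih =>
    rcases Ordinal.zero_or_succ_or_isSuccLimit γ with rfl | ⟨δ, rfl⟩ | hl
    · intro m hm hmem
      rw [mul_zero, iterDeriv_zero] at hmem
      obtain ⟨m₀, hG, hEq⟩ := hmem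
      obtain rfl := chi_injective hEq
      obtain ⟨⟨t, htF, hint⟩, hmM⟩ := hG
      exact ⟨t, by rw [iterDeriv_zero]; exact ⟨t, htF, rfl⟩, hint⟩
    · -- successor case
      intro m hm hmem
      have hBB := claimB hFh hAFcl hAGcl δ (ih δ (Order.lt_succ δ))
      have h2succ : 2 * Order.succ δ = Order.succ (2*δ + 1) := by
        rw [Ordinal.mul_succ, ← Ordinal.add_one_eq_succ, add_assoc, one_add_one_eq_two]
      rw [h2succ, iterDeriv_succ] at hmem
      have hmne : m.Nonempty := Finset.nonempty_iff_ne_empty.2 hm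
      have hdata : ∀ k : ℕ, ∃ (T h : Finset ℕ),
          chi T ∈ iterDeriv (chi '' F) δ ∧ Interpolates h m ∧
          (∀ a, a ∈ h ↔ (a ∈ T ∧ a < WB m)) ∧
          (∃ b, WB m + k ≤ b ∧ b ≤ T.sup id) := by
        intro k
        have hDsub : iterDeriv (chi '' Restr (Ad F) M) (2*δ+1) ⊆ Set.range chi :=
          subset_trans (iterDeriv_isClosed_and_subset hAGcl _).2 (image_subset_range _ _)
        obtain ⟨m', hm'D, hsub, hne, hnew⟩ := approx hDsub hmem (WB m + k)
          (fun b hb => lt_of_lt_of_le (lt_WB hb) (Nat.le_add_right _ _))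
        have hm'ne : m' ≠ ∅ := fun hcon => hm (Finset.subset_empty.1 (hcon ▸ hsub))
        obtain ⟨u, e, hTd, hui, hm'e, _⟩ := hBB m' hm'ne hm'D
        have heW : WB m ≤ e :=
          sup_lt_of_forall hmne (fun b hb => hm'e b (hsub hb))
        have hm'eq : m' = m ∪ (m' \ m) := (Finset.union_sdiff_of_subset hsub).symm
        have hsep : ∀ a ∈ m, ∀ b ∈ (m' \ m), a < b := by
          intro a ha b hb
          rw [Finset.mem_sdiff] at hb
          exact lt_of_lt_of_le (lt_WB ha) (le_trans (Nat.le_add_right _ _) (hnew b hb.1 hb.2))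
        have hsorteq : m'.sort (· ≤ ·) = m.sort (· ≤ ·) ++ (m' \ m).sort (· ≤ ·) := by
          conv_lhs => rw [hm'eq]
          exact sort_union_append hsep
        rw [interpolates_iff, hsorteq] at hui
        obtain ⟨t1, t2, hts, hlen, hitp1, hgt⟩ := itpAux_split hui
        have ht1sorted : t1.Pairwise (· < ·) := by
          refine List.Pairwise.sublist ?_ (Finset.sortedLT_sort u).pairwise
          rw [hts]; exact List.sublist_append_left t1 t2
        have ht1u : ∀ a ∈ t1, a ∈ u := by
          intro a ha
          refine (Finset.mem_sort (α := ℕ) (· ≤ ·)).1 ?_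
          rw [hts]; exact List.mem_append_left t2 ha
        have ht1W : ∀ a ∈ t1, a < WB m := by
          intro a ha
          obtain ⟨b, hb, hab⟩ := itpAux_exists_ge hitp1 a ha
          exact lt_of_le_of_lt hab (lt_WB ((Finset.mem_sort _).1 hb))
        refine ⟨insert e u, t1.toFinset, hTd, ?_, ?_, ?_⟩
        · rw [interpolates_iff, toFinset_sort ht1sorted]
          exact hitp1
        · intro a
          rw [List.mem_toFinset]
          constructor
          · intro ha
            exact ⟨Finset.mem_insert_of_mem (ht1u a ha), ht1W a ha⟩
          · rintro ⟨haT, haW⟩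
            rw [Finset.mem_insert] at haT
            rcases haT with rfl | hau
            · omega
            · have : a ∈ t1 ++ t2 := by rw [← hts]; exact (Finset.mem_sort _).2 hau
              rcases List.mem_append.1 this with h1 | h2
              · exact h1
              · exfalso
                have hgtm : ∀ b ∈ m, b < a :=
                  fun b hb => hgt a h2 b ((Finset.mem_sort _).2 hb)
                have := sup_lt_of_forall hmne hgtm
                omega
        · have hex : ∃ b₀ ∈ m', b₀ ∉ m := by
            by_contra hcon
            push_neg at hcon
            exact hne (Finset.Subset.antisymm hcon hsub)
          obtain ⟨b₀, hb₀m', hb₀m⟩ := hex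
          refine ⟨b₀, hnew b₀ hb₀m' hb₀m, ?_⟩
          exact le_trans (le_of_lt (hm'e b₀ hb₀m')) (Finset.le_sup (f := id) (Finset.mem_insert_self e u))
      choose T hd hT hhd hwin hbnd using hdata
      have hheadfin : (hd '' Set.univ).Finite := by
        refine Set.Finite.subset ((Finset.range (WB m)).powerset.finite_toSet) ?_
        rintro f ⟨k, _, rfl⟩
        simp only [Finset.coe_powerset, Set.mem_preimage, Set.mem_powerset_iff, Finset.coe_range]
        intro a ha
        exact Set.mem_Iio.2 ((hwin k a).1 ha).2
      obtain ⟨hstar, hK1⟩ := pigeon Set.infinite_univ hheadfin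
      set K1 := Set.univ ∩ hd ⁻¹' {hstar} with hK1def
      have hK1prop : ∀ k ∈ K1, hd k = hstar := fun k hk => hk.2
      by_cases hTfin : (T '' K1).Finite
      · exfalso
        obtain ⟨Tstar, hK2⟩ := pigeon hK1 hTfin
        obtain ⟨k, hkK2, hk⟩ := hK2.exists_gt (Tstar.sup id + WB m)
        obtain ⟨b, hb1, hb2⟩ := hbnd k
        have hTk : T k = Tstar := hkK2.2
        rw [hTk] at hb2
        omega
      · have hVinf : (chi '' (T '' K1)).Infinite :=
          Set.Infinite.image (fun a _ b _ h => chi_injective h) hTfin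
        obtain ⟨y, hy⟩ := exists_accPt_of_infinite hVinf
        obtain ⟨k₀, hk₀⟩ := hK1.nonempty
        have hwindowAll : chi '' (T '' K1) ⊆ cyl (chi hstar) (WB m) := by
          rintro z ⟨Tk, ⟨k, hkK1, rfl⟩, rfl⟩
          rw [chi_mem_cyl_iff]
          intro n hn
          have hwk := hwin k n
          rw [hK1prop k hkK1] at hwk
          constructor
          · intro hnT
            exact hwk.2 ⟨hnT, hn⟩
          · intro hnh
            exact (hwk.1 hnh).1
        have hyd : y ∈ iterDeriv (chi '' F) (Order.succ δ) := by
          rw [iterDeriv_succ]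
          have hsub2 : chi '' (T '' K1) ⊆ iterDeriv (chi '' F) δ := by
            rintro z ⟨Tk, ⟨k, _, rfl⟩, rfl⟩
            exact hT k
          exact AccPt.mono hy (Filter.principal_mono.2 hsub2)
        have hycyl : y ∈ cyl (chi hstar) (WB m) := by
          have h1 : y ∈ closure (chi '' (T '' K1)) := derivedSet_subset_closure _ hy
          have := closure_mono hwindowAll h1
          rwa [(isClosed_cyl _ _).closure_eq] at this
        obtain ⟨w, hwF, hwEq⟩ := (iterDeriv_isClosed_and_subset hAFcl (Order.succ δ)).2 hyd
        subst hwEq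
        have hhsubw : hstar ⊆ w := by
          intro a ha
          have haW : a < WB m := by
            have := (hwin k₀ a)
            rw [hK1prop k₀ hk₀] at this
            exact (this.1 ha).2
          have := chi_mem_cyl_iff.1 hycyl a haW
          exact this.2 ha
        refine ⟨hstar, subset_rank hFh _ hyd hhsubw, ?_⟩
        have := hhd k₀
        rwa [hK1prop k₀ hk₀] at this
    · -- limit case
      intro m hm hmem
      set TM := (interp_finite m).toFinset with hTM
      have hsel : ∀ δ : Ordinal.{0}, δ < γ →
          ∃ t, Interpolates t m ∧ chi t ∈ iterDeriv (chi '' F) δ := by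
        intro δ hδ
        have h2δ : chi m ∈ iterDeriv (chi '' Restr (Ad F) M) (2*δ) :=
          iterDeriv_antitone hAGcl (mul_le_mul_right hδ.le 2) hmem
        obtain ⟨t, h1, h2⟩ := ih δ hδ m hm h2δ
        exact ⟨t, h2, h1⟩
      by_contra hcon
      push_neg at hcon
      have hchoice : ∀ t : Finset ℕ, ∃ β, β < γ ∧
          (Interpolates t m → chi t ∉ iterDeriv (chi '' F) β) := by
        intro t
        by_cases h : Interpolates t m
        · by_contra hc2
          push_neg at hc2
          refine (hcon t ?_) h
          rw [iterDeriv_limit _ hl, mem_iInter]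
          intro b
          exact (hc2 b b.2).2
        · exact ⟨0, hl.pos, fun h' => absurd h' h⟩
      choose β hβlt hβno using hchoice
      set B := TM.sup β with hB
      have hBlt : B < γ := by
        refine Finset.sup_lt_iff ?_ |>.2 (fun t _ => hβlt t)
        simpa using hl.pos
      obtain ⟨t, hti, htd⟩ := hsel B hBlt
      have htTM : t ∈ TM := by
        rw [hTM, Set.Finite.mem_toFinset]
        exact hti
      exact hβno t hti (iterDeriv_antitone hAFcl (Finset.le_sup htTM) htd)

end Main
end AdIdx0

open AdIdx0 in
/-- ι(F) ≤ ι(Ad(F)↾M) ≤ 2·ι(F) when Ad(F)↾M is homogeneous on M. -/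
theorem ad_index_bounds (F : Set (Finset ℕ)) (M : Set ℕ)
    (hFc : IsCompactFam F) (hFh : Hered F) (hM : M.Infinite)
    (h : ∃ α : Ordinal.{0}, IsHomogOn (Restr (Ad F) M) M α) :
    cbIndex F ≤ cbIndex (Restr (Ad F) M) ∧
    cbIndex (Restr (Ad F) M) ≤ 2 * cbIndex F := by
  classical
  have hAFcl : IsClosed (chi '' F) := hFc
  have hAGcl : IsClosed (chi '' Restr (Ad F) M) := closed_Restr (closed_Ad hFc hFh) M
  have hAFcnt : (chi '' F).Countable := (Set.countable_range chi).mono (Set.image_subset_range _ _)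
  obtain ⟨o₀, ho₀⟩ := scat hAFcl hAFcnt
  have hSFne : {o : Ordinal | iterDeriv (chi '' F) o ⊆ {chi ∅}}.Nonempty :=
    ⟨o₀, by rw [Set.mem_setOf_eq, ho₀]; exact Set.empty_subset _⟩
  have hρ : cbIndex F ∈ {o : Ordinal | iterDeriv (chi '' F) o ⊆ {chi ∅}} := csInf_mem hSFne
  have hupper : iterDeriv (chi '' Restr (Ad F) M) (2 * cbIndex F) ⊆ {chi ∅} := by
    intro x hx
    obtain ⟨m, hmG, rfl⟩ := (iterDeriv_isClosed_and_subset hAGcl _).2 hx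
    by_cases hm : m = ∅
    · subst hm; exact Set.mem_singleton _
    · exfalso
      obtain ⟨t, htd, hti⟩ := claimA hFh hAFcl hAGcl (cbIndex F) m hm hx
      have ht1 := hρ htd
      have ht0 : t = ∅ := chi_injective (by simpa using ht1)
      subst ht0
      exact hm (interp_nil hti)
  have hup : cbIndex (Restr (Ad F) M) ≤ 2 * cbIndex F := csInf_le' hupper
  refine ⟨?_, hup⟩
  have hιG : cbIndex (Restr (Ad F) M) ∈
      {o : Ordinal | iterDeriv (chi '' Restr (Ad F) M) o ⊆ {chi ∅}} :=
    csInf_mem ⟨2 * cbIndex F, hupper⟩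
  by_contra hlt'
  push_neg at hlt'
  have hnotin : cbIndex (Restr (Ad F) M) ∉ {o : Ordinal | iterDeriv (chi '' F) o ⊆ {chi ∅}} := by
    intro hin
    exact absurd (csInf_le' hin) (not_le.2 hlt')
  obtain ⟨x, hxd, hxne⟩ := Set.not_subset.1 hnotin
  obtain ⟨v, hvF, rfl⟩ := (iterDeriv_isClosed_and_subset hAFcl _).2 hxd
  have hvne : v ≠ ∅ := fun hc => hxne (by rw [hc]; exact Set.mem_singleton _)
  obtain ⟨n, hn⟩ := Finset.nonempty_iff_ne_empty.2 hvne
  have hsingle : chi {n} ∈ iterDeriv (chi '' F) (cbIndex (Restr (Ad F) M)) :=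
    subset_rank hFh _ hxd (Finset.singleton_subset_iff.2 hn)
  obtain ⟨mp, hmpM, hmp⟩ := hM.exists_gt n
  have hint : Interpolates {n} {mp} := by
    rw [interpolates_iff, Finset.sort_singleton, Finset.sort_singleton]
    exact ⟨Nat.zero_le n, le_of_lt hmp, trivial⟩
  have hlow := lowerClaim hFh hM hAFcl _ {n} {mp} hsingle (by simpa using hmpM) hint
  have hmem2 := hιG hlow
  have : ({mp} : Finset ℕ) = ∅ := chi_injective (by simpa using hmem2)
  simp at this
end
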